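/- arXiv:1411.2700 — 4 statements merged into one kernel-verified Lean document; each statement's English description precedes it below -/
import Mathlib

section
/- Fix ρ ∈ (0,1/2). There exist constants C > 0 and h₀ ∈ (0,1) such that for all h ∈ (0,h₀) and all β ∈ ℝ with |β|h^{1/2−ρ} < 1/3 and |β|h^{ρ} < 1/3: |λ₁(H_{β,h}) − (−1 − βh^{1/2})| ≤ C·(β²h + exp(−h^{−ρ})). -/
open MeasureTheory Real Set

noncomputable section

/-- The bottom of the weighted 1D Robin–Dirichlet operator `H_{β,h}` on `(0, h^{-ρ})`,
defined variationally as the infimum of the weighted Rayleigh quotient over nonzero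
members of `V_h = {u ∈ C¹([0,h^{-ρ}]) : u(h^{-ρ}) = 0}`. -/
def lamBetaOne (ρ h β : ℝ) : ℝ :=
  sInf { r : ℝ | ∃ u : ℝ → ℝ,
    ContDiffOn ℝ 1 u (Set.Icc 0 (h ^ (-ρ))) ∧ u (h ^ (-ρ)) = 0 ∧
    (∃ τ ∈ Set.Icc (0 : ℝ) (h ^ (-ρ)), u τ ≠ 0) ∧
    r = ((∫ τ in (0 : ℝ)..(h ^ (-ρ)), (derivWithin u (Set.Icc 0 (h ^ (-ρ))) τ) ^ 2 *
            (1 - β * h ^ ((1 : ℝ) / 2) * τ)) - (u 0) ^ 2) /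
        ∫ τ in (0 : ℝ)..(h ^ (-ρ)), (u τ) ^ 2 * (1 - β * h ^ ((1 : ℝ) / 2) * τ) }

namespace WGSE

lemma ftcR {L : ℝ} (hL : 0 ≤ L) {G G' : ℝ → ℝ}
    (hcont : ContinuousOn G (Icc 0 L))
    (hd : ∀ x ∈ Ioo (0:ℝ) L, HasDerivWithinAt G (G' x) (Ioi x) x)
    (hint : IntervalIntegrable G' volume 0 L) :
    ∫ x in (0:ℝ)..L, G' x = G L - G 0 :=
  intervalIntegral.integral_eq_sub_of_hasDeriv_right_of_le hL hcont hd hint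

set_option maxHeartbeats 1000000 in
lemma key_lower {L b : ℝ} (hL : 2 ≤ L) (hb : |b| ≤ 1/3) (hbL : |b| * L ≤ 1/3)
    {u g : ℝ → ℝ} (hu : ContinuousOn u (Icc 0 L)) (hg : ContinuousOn g (Icc 0 L))
    (hder : ∀ x ∈ Icc (0:ℝ) L, HasDerivWithinAt u (g x) (Icc 0 L) x)
    (huL : u L = 0) :
    -(1 + b + 3*b^2) * (∫ τ in (0:ℝ)..L, (u τ)^2 * (1 - b*τ)) ≤
      (∫ τ in (0:ℝ)..L, (g τ)^2 * (1 - b*τ)) - (u 0)^2 := by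
  have hL0 : (0:ℝ) ≤ L := by linarith only [hL]
  have hL0' : (0:ℝ) < L := by linarith only [hL]
  have hIcc : uIcc (0:ℝ) L = Icc 0 L := uIcc_of_le hL0
  have habs : (0:ℝ) ≤ |b| := abs_nonneg b
  have hw1 : ∀ τ ∈ Icc (0:ℝ) L, (2:ℝ)/3 ≤ 1 - b*τ := by
    intro τ hτ
    have h1 : |b*τ| ≤ 1/3 := by
      rw [abs_mul, abs_of_nonneg hτ.1]
      calc |b| * τ ≤ |b| * L := mul_le_mul_of_nonneg_left hτ.2 habs
        _ ≤ 1/3 := hbL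
    have h2 := abs_le.1 h1
    linarith only [h2.1, h2.2]
  -- continuity
  have cw : ContinuousOn (fun τ : ℝ => 1 - b*τ) (Icc 0 L) :=
    (continuous_const.sub (continuous_const.mul continuous_id)).continuousOn
  have cF : ContinuousOn (fun τ : ℝ => g τ + u τ) (Icc 0 L) := hg.add hu
  have cid : ContinuousOn (fun τ : ℝ => τ) (Icc (0:ℝ) L) := continuous_id.continuousOn
  -- integrability helper
  have ii : ∀ {f : ℝ → ℝ}, ContinuousOn f (Icc 0 L) → IntervalIntegrable f volume 0 L := by
    intro f hf
    exact ContinuousOn.intervalIntegrable (by rw [hIcc]; exact hf)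
  have iS : IntervalIntegrable (fun τ => (u τ)^2) volume 0 L := ii (hu.pow 2)
  have iM : IntervalIntegrable (fun τ => τ*(u τ)^2) volume 0 L := ii (cid.mul (hu.pow 2))
  have iP : IntervalIntegrable (fun τ => (g τ + u τ)^2) volume 0 L := ii (cF.pow 2)
  have iD : IntervalIntegrable (fun τ => (u τ)^2*(1-b*τ)) volume 0 L := ii ((hu.pow 2).mul cw)
  have iNw : IntervalIntegrable (fun τ => (g τ)^2*(1-b*τ)) volume 0 L := ii ((hg.pow 2).mul cw)
  have iPw : IntervalIntegrable (fun τ => (g τ + u τ)^2*(1-b*τ)) volume 0 L := ii ((cF.pow 2).mul cw)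
  have iUF : IntervalIntegrable (fun τ => (u τ)*(g τ + u τ)) volume 0 L := ii (hu.mul cF)
  have iTUF : IntervalIntegrable (fun τ => (τ+1/2)*(u τ)*(g τ + u τ)) volume 0 L :=
    ii (((cid.add continuousOn_const).mul hu).mul cF)
  have iug : IntervalIntegrable (fun τ => (u τ)*(g τ)) volume 0 L := ii (hu.mul hg)
  have ibu2 : IntervalIntegrable (fun τ => b*(u τ)^2) volume 0 L := ii (continuousOn_const.mul (hu.pow 2))
  have imix : IntervalIntegrable (fun τ => -b*(u τ)^2 + (1-b*τ)*(2*(u τ)*(g τ))) volume 0 L := by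
    refine ii ?_
    exact (continuousOn_const.mul (hu.pow 2)).add (cw.mul ((continuousOn_const.mul hu).mul hg))
  -- notation
  set S := ∫ τ in (0:ℝ)..L, (u τ)^2 with hSdef
  set M := ∫ τ in (0:ℝ)..L, τ*(u τ)^2 with hMdef
  set P := ∫ τ in (0:ℝ)..L, (g τ + u τ)^2 with hPdef
  set D := ∫ τ in (0:ℝ)..L, (u τ)^2*(1-b*τ) with hDdef
  set Nw := ∫ τ in (0:ℝ)..L, (g τ)^2*(1-b*τ) with hNwdef
  set Pw := ∫ τ in (0:ℝ)..L, (g τ + u τ)^2*(1-b*τ) with hPwdef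
  set TUF := ∫ τ in (0:ℝ)..L, (τ+1/2)*(u τ)*(g τ + u τ) with hTUFdef
  -- derivative upgrade
  have hderIoi : ∀ x ∈ Ioo (0:ℝ) L, HasDerivWithinAt u (g x) (Ioi x) x := by
    intro x hx
    exact (hder x (Ioo_subset_Icc_self hx)).mono_of_mem_nhdsWithin
      (Icc_mem_nhdsGT_of_mem ⟨hx.1.le, hx.2⟩)
  have hsq : ∀ x ∈ Ioo (0:ℝ) L, HasDerivWithinAt (fun τ => (u τ)^2) (2*(u x)*(g x)) (Ioi x) x := by
    intro x hx
    have h := (hderIoi x hx).fun_pow 2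
    exact h.congr_deriv (by push_cast; ring)
  -- Identity A : ∫ (-b u^2 + w*2ug) = -(u 0)^2
  have hA : ∫ τ in (0:ℝ)..L, (-b*(u τ)^2 + (1-b*τ)*(2*(u τ)*(g τ))) = -(u 0)^2 := by
    have hft := ftcR hL0 (G := fun τ => (1-b*τ)*(u τ)^2)
      (G' := fun τ => -b*(u τ)^2 + (1-b*τ)*(2*(u τ)*(g τ)))
      (cw.mul (hu.pow 2))
      (by
        intro x hx
        have h1 : HasDerivWithinAt (fun τ : ℝ => 1-b*τ) (-b) (Ioi x) x := by
          simpa using (((hasDerivAt_id x).const_mul b).const_sub 1).hasDerivWithinAt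
        have := h1.fun_mul (hsq x hx)
        convert this using 1 <;> try ring)
      imix
    rw [hft]
    simp only [huL]
    ring
  -- Identity 4 : ∫ 2ug = -(u 0)^2
  have h4 : ∫ τ in (0:ℝ)..L, (2*(u τ)*(g τ)) = -(u 0)^2 := by
    have hft := ftcR hL0 (G := fun τ => (u τ)^2)
      (G' := fun τ => 2*(u τ)*(g τ)) (hu.pow 2)
      (by intro x hx; exact hsq x hx)
      (ii ((continuousOn_const.mul hu).mul hg))
    rw [hft]
    simp only [huL]
    ring
  -- Identity 3 : M - TUF = (1/4)(u 0)^2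
  have h3 : M - TUF = (1/4)*(u 0)^2 := by
    have hft := ftcR hL0 (G := fun τ => -(τ/2+1/4)*(u τ)^2)
      (G' := fun τ => τ*(u τ)^2 - (τ+1/2)*(u τ)*(g τ + u τ))
      ((continuous_id.div_const 2 |>.add continuous_const).neg.continuousOn.mul (hu.pow 2) : ContinuousOn _ _)
      (by
        intro x hx
        have h1 : HasDerivWithinAt (fun τ : ℝ => -(τ/2+1/4)) (-(1/2)) (Ioi x) x := by
          simpa using (((hasDerivAt_id x).div_const 2).add_const (1/4)).fun_neg.hasDerivWithinAt
        have := h1.fun_mul (hsq x hx)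
        exact this.congr_deriv (by ring))
      (ii ((cid.mul (hu.pow 2)).sub (((cid.add continuousOn_const).mul hu).mul cF)))
    rw [intervalIntegral.integral_sub iM iTUF] at hft
    rw [hft]
    simp only [huL]
    ring
  -- hU0 : (u 0)^2 ≤ 3S + P
  have hUF : ∫ τ in (0:ℝ)..L, (u τ)*(g τ) = -(u 0)^2/2 := by
    have h2 : ∫ τ in (0:ℝ)..L, (2*((u τ)*(g τ))) = -(u 0)^2 := by
      rw [show (fun τ => 2*((u τ)*(g τ))) = (fun τ => 2*(u τ)*(g τ)) from funext (fun τ => by ring)] at *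
      exact h4
    rw [intervalIntegral.integral_const_mul] at h2
    linarith
  have hu0 : (u 0)^2 ≤ 3*S + P := by
    have hmono : ∫ τ in (0:ℝ)..L, (-(1/2)*((u τ)^2 + (g τ + u τ)^2)) ≤ ∫ τ in (0:ℝ)..L, (u τ)*(g τ + u τ) := by
      apply intervalIntegral.integral_mono_on hL0 (ii ((continuousOn_const.mul ((hu.pow 2).add (cF.pow 2))) : ContinuousOn _ _)) iUF
      intro τ _
      show -(1/2)*((u τ)^2 + (g τ + u τ)^2) ≤ (u τ)*(g τ + u τ)
      nlinarith only [sq_nonneg (u τ + (g τ + u τ))]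
    rw [intervalIntegral.integral_const_mul] at hmono
    rw [intervalIntegral.integral_add iS iP] at hmono
    have hUFsplit : ∫ τ in (0:ℝ)..L, (u τ)*(g τ + u τ) = -(u 0)^2/2 + S := by
      rw [show (fun τ => (u τ)*(g τ + u τ)) = (fun τ => (u τ)*(g τ) + (u τ)^2) from funext (fun τ => by ring)]
      rw [intervalIntegral.integral_add iug iS, hUF]
    rw [hUFsplit] at hmono
    linarith only [hmono]
  -- TUF ≤ M/2 + S/16 + L*P
  have hTUF : TUF ≤ (1/2)*M + (1/16)*S + L*P := by
    have hmono : TUF ≤ ∫ τ in (0:ℝ)..L, ((1/2)*(τ*(u τ)^2) + ((1/16)*(u τ)^2 + L*(g τ + u τ)^2)) := by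
      apply intervalIntegral.integral_mono_on hL0 iTUF
      · exact (ii (((continuousOn_const.mul (cid.mul (hu.pow 2)))).add
          ((continuousOn_const.mul (hu.pow 2)).add (continuousOn_const.mul (cF.pow 2)))))
      · intro τ hτ
        set uu := u τ
        set FF := g τ + u τ
        have h4L : (0:ℝ) < 4*L := by linarith only [hL]
        have key4 : 0 ≤ 4*L*((1/2)*(τ*uu^2) + ((1/16)*uu^2 + L*FF^2) - (τ+1/2)*uu*FF) := by
          nlinarith only [sq_nonneg ((τ+1/2)*uu - 2*L*FF), mul_nonneg (mul_nonneg hτ.1 (by linarith only [hτ.2, hL] : (0:ℝ) ≤ 2*L - τ - 1)) (sq_nonneg uu), sq_nonneg uu, hτ.1, hτ.2, hL]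
        have := (mul_nonneg_iff_of_pos_left h4L).1 key4
        linarith only [this]
    rw [intervalIntegral.integral_add (ii (continuousOn_const.fun_mul (cid.fun_mul (hu.fun_pow 2))))
      ((ii (continuousOn_const.fun_mul (hu.fun_pow 2))).add (ii (continuousOn_const.fun_mul (cF.fun_pow 2)))),
      intervalIntegral.integral_add (ii (continuousOn_const.fun_mul (hu.fun_pow 2))) (ii (continuousOn_const.fun_mul (cF.fun_pow 2))),
      intervalIntegral.integral_const_mul, intervalIntegral.integral_const_mul,
      intervalIntegral.integral_const_mul] at hmono
    linarith only [hmono]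
  -- Pw split
  have hPwEq : Pw = Nw + (D + (b*S + -(u 0)^2)) := by
    have hcongr : Pw = ∫ τ in (0:ℝ)..L, ((g τ)^2*(1-b*τ) + ((u τ)^2*(1-b*τ) + (b*(u τ)^2 + (-b*(u τ)^2 + (1-b*τ)*(2*(u τ)*(g τ)))))) := by
      apply intervalIntegral.integral_congr
      intro τ _
      ring
    rw [hcongr,
      intervalIntegral.integral_add iNw (iD.add (ibu2.add imix)),
      intervalIntegral.integral_add iD (ibu2.add imix),
      intervalIntegral.integral_add ibu2 imix,
      intervalIntegral.integral_const_mul, hA]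
  -- S = D + b*M
  have hSeq : S = D + b*M := by
    have : D + b*M = ∫ τ in (0:ℝ)..L, ((u τ)^2*(1-b*τ) + b*(τ*(u τ)^2)) := by
      rw [intervalIntegral.integral_add iD (ii (continuousOn_const.fun_mul (cid.fun_mul (hu.fun_pow 2)))),
        intervalIntegral.integral_const_mul]
    rw [this]
    apply intervalIntegral.integral_congr
    intro τ _
    ring
  -- (2/3)S ≤ D, (2/3)P ≤ Pw
  have h23S : (2/3)*S ≤ D := by
    have hmm := intervalIntegral.integral_mono_on (f := fun τ => (2/3 : ℝ)*(u τ)^2) hL0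
      (ii (continuousOn_const.mul (hu.pow 2))) iD
      (fun τ hτ => by
        have := mul_le_mul_of_nonneg_left (hw1 τ hτ) (sq_nonneg (u τ))
        linarith only [this])
    rwa [intervalIntegral.integral_const_mul] at hmm
  have h23P : (2/3)*P ≤ Pw := by
    have hmm := intervalIntegral.integral_mono_on (f := fun τ => (2/3 : ℝ)*(g τ + u τ)^2) hL0
      (ii (continuousOn_const.mul (cF.pow 2))) iPw
      (fun τ hτ => by
        have := mul_le_mul_of_nonneg_left (hw1 τ hτ) (sq_nonneg (g τ + u τ))
        linarith only [this])
    rwa [intervalIntegral.integral_const_mul] at hmm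
  -- nonneg
  have hS0 : 0 ≤ S := by
    rw [hSdef]; exact intervalIntegral.integral_nonneg hL0 (fun τ _ => sq_nonneg _)
  have hP0 : 0 ≤ P := by
    rw [hPdef]; exact intervalIntegral.integral_nonneg hL0 (fun τ _ => sq_nonneg _)
  have hM0 : 0 ≤ M := by
    rw [hMdef]
    exact intervalIntegral.integral_nonneg hL0 (fun τ hτ => mul_nonneg hτ.1 (sq_nonneg _))
  have hD0 : 0 ≤ D := by
    rw [hDdef]
    exact intervalIntegral.integral_nonneg hL0
      (fun τ hτ => mul_nonneg (sq_nonneg _) (by linarith only [hw1 τ hτ]))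
  -- final assembly
  clear_value S M P D Nw Pw TUF
  have hbS : b*S = b*D + b^2*M := by rw [hSeq]; ring
  have hMle : M ≤ 2*S + (1/2)*P + 2*(L*P) := by linarith only [h3, hu0, hTUF, hS0]
  have hq1 : b^2*M ≤ b^2*(2*S + (1/2)*P + 2*(L*P)) := mul_le_mul_of_nonneg_left hMle (sq_nonneg b)
  have hS32 : S ≤ (3/2)*D := by linarith only [h23S]
  have hq2 : b^2*S ≤ b^2*((3/2)*D) := mul_le_mul_of_nonneg_left hS32 (sq_nonneg b)
  have hb2 : b^2 ≤ 1/9 := by nlinarith only [sq_abs b, hb, habs]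
  have hb2L : b^2*L ≤ 1/9 := by
    have h1 : |b| * (|b| * L) ≤ (1/3) * (1/3) := mul_le_mul hb hbL (mul_nonneg habs hL0) (by norm_num)
    have h2 : b^2*L = |b| * (|b| * L) := by rw [← sq_abs b]; ring
    linarith only [h1, h2]
  have hq3 : (b^2/2)*P ≤ (1/18)*P := mul_le_mul_of_nonneg_right (by linarith only [hb2]) hP0
  have hq4 : (b^2*L)*P ≤ (1/9)*P := mul_le_mul_of_nonneg_right hb2L hP0
  have hNw2 : Nw - (u 0)^2 = Pw - D - b*S := by linarith only [hPwEq]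
  have hq1' : b^2*(2*S + (1/2)*P + 2*(L*P)) = 2*(b^2*S) + (b^2/2)*P + 2*((b^2*L)*P) := by ring
  have hq2' : b^2*((3/2)*D) = (3/2)*(b^2*D) := by ring
  have hgoal' : -(1+b+3*b^2)*D = -D - b*D - 3*(b^2*D) := by ring
  linarith only [hNw2, hbS, hq1, hq1', hq2, hq2', hq3, hq4, h23P, hP0, hgoal']

end WGSE

namespace WGSE2

lemma expD (x : ℝ) : HasDerivAt (fun τ : ℝ => Real.exp (-τ)) (-Real.exp (-x)) x := by
  exact ((Real.hasDerivAt_exp (-x)).comp x ((hasDerivAt_id x).fun_neg)).congr_deriv (by ring)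

lemma expD2 (x : ℝ) : HasDerivAt (fun τ : ℝ => (Real.exp (-τ))^2) (-2*(Real.exp (-x))^2) x := by
  have := (expD x).fun_pow 2
  exact this.congr_deriv (by push_cast; ring)

set_option maxHeartbeats 1000000 in
lemma key_upper {L b : ℝ} (hL : 2 ≤ L) (hb : |b| ≤ 1/3) (hbL : |b| * L ≤ 1/3) :
    1/8 ≤ (∫ τ in (0:ℝ)..L, (Real.exp (-τ) - Real.exp (-L))^2 * (1 - b*τ)) ∧
    ((∫ τ in (0:ℝ)..L, (Real.exp (-τ))^2 * (1 - b*τ)) - (1 - Real.exp (-L))^2)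
      + (1+b) * (∫ τ in (0:ℝ)..L, (Real.exp (-τ) - Real.exp (-L))^2 * (1 - b*τ))
      ≤ 2*(b^2 + Real.exp (-L)) := by
  have hL0 : (0:ℝ) ≤ L := by linarith
  have hIcc : uIcc (0:ℝ) L = Icc 0 L := uIcc_of_le hL0
  have habs : (0:ℝ) ≤ |b| := abs_nonneg b
  set a := Real.exp (-L) with hadef
  have ha0 : 0 < a := Real.exp_pos _
  have hw1 : ∀ τ ∈ Icc (0:ℝ) L, (2:ℝ)/3 ≤ 1 - b*τ := by
    intro τ hτ
    have h1 : |b*τ| ≤ 1/3 := by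
      rw [abs_mul, abs_of_nonneg hτ.1]
      calc |b| * τ ≤ |b| * L := mul_le_mul_of_nonneg_left hτ.2 habs
        _ ≤ 1/3 := hbL
    have h2 := abs_le.1 h1
    linarith only [h2.1, h2.2]
  -- integrability helper
  have ii : ∀ {f : ℝ → ℝ}, ContinuousOn f (Icc 0 L) → IntervalIntegrable f volume 0 L := by
    intro f hf
    exact ContinuousOn.intervalIntegrable (by rw [hIcc]; exact hf)
  have cexp : ContinuousOn (fun τ : ℝ => Real.exp (-τ)) (Icc 0 L) :=
    (Real.continuous_exp.comp continuous_neg).continuousOn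
  have cw : ContinuousOn (fun τ : ℝ => 1 - b*τ) (Icc 0 L) :=
    (continuous_const.sub (continuous_const.mul continuous_id)).continuousOn
  -- a ≤ 1/7
  have ha7 : a ≤ 1/7 := by
    have h1 : a ≤ Real.exp (-2) := Real.exp_le_exp.2 (by linarith)
    have h2 : Real.exp 2 = Real.exp 1 * Real.exp 1 := by rw [← Real.exp_add]; norm_num
    have h7 : (7:ℝ) ≤ Real.exp 2 := by nlinarith [Real.exp_one_gt_d9]
    have hmul : Real.exp (-2) * Real.exp 2 = 1 := by rw [← Real.exp_add]; norm_num
    nlinarith only [Real.exp_pos (-2), h1, h7, hmul]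
  -- a*L ≤ 1, a*L^2 ≤ 4
  have haL : a*L ≤ 1 := by
    have h1 : L + 1 ≤ Real.exp L := Real.add_one_le_exp L
    have hmul : a * Real.exp L = 1 := by rw [hadef, ← Real.exp_add]; norm_num
    nlinarith only [ha0, h1, hmul]
  have haL2 : a*L^2 ≤ 4 := by
    have h1 : L/2 + 1 ≤ Real.exp (L/2) := Real.add_one_le_exp (L/2)
    have h2 : Real.exp L = Real.exp (L/2) * Real.exp (L/2) := by rw [← Real.exp_add]; norm_num
    have hmul : a * Real.exp L = 1 := by rw [hadef, ← Real.exp_add]; norm_num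
    have hE4 : L^2/4 ≤ Real.exp L := by nlinarith only [h1, h2, hL, Real.exp_pos (L/2)]
    nlinarith only [ha0, hE4, hmul]
  -- exact integrals
  have I1 : (∫ τ in (0:ℝ)..L, (Real.exp (-τ))^2 * (1 - b*τ))
      = 1/2 - b/4 + (-(1/2) + b*(L/2+1/4))*a^2 := by
    have hder : ∀ x ∈ uIcc (0:ℝ) L, HasDerivAt
        (fun τ => (-(1/2) + b*(τ/2+1/4)) * (Real.exp (-τ))^2)
        ((Real.exp (-x))^2 * (1 - b*x)) x := by
      intro x _
      have hp : HasDerivAt (fun τ : ℝ => -(1/2) + b*(τ/2+1/4)) (b*(1/2)) x :=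
        (((hasDerivAt_id' (𝕜 := ℝ) (x := x)).div_const 2).add_const (1/4) |>.const_mul b).const_add (-(1/2))
      have := hp.fun_mul (expD2 x)
      exact this.congr_deriv (by ring)
    rw [intervalIntegral.integral_eq_sub_of_hasDerivAt hder (ii ((cexp.pow 2).mul cw))]
    simp [hadef]
    ring
  have I2 : (∫ τ in (0:ℝ)..L, (Real.exp (-τ) - a)^2 * (1 - b*τ))
      = 1/2 - 2*a - b/4 + 2*a*b + a^2*(3/2+L) - a^2*b*(3*L/2 + 7/4 + L^2/2) := by
    have hder : ∀ x ∈ uIcc (0:ℝ) L, HasDerivAt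
        (fun τ => -(1/2)*(Real.exp (-τ))^2 + 2*a*Real.exp (-τ) + a^2*τ
          + (b*(τ/2+1/4))*(Real.exp (-τ))^2 - (2*a*b)*((τ+1)*Real.exp (-τ)) - (a^2*b/2)*τ^2)
        ((Real.exp (-x) - a)^2 * (1 - b*x)) x := by
      intro x _
      have hp1 := (expD2 x).const_mul (-(1/2) : ℝ)
      have hp2 := (expD x).const_mul (2*a)
      have hp3 := (hasDerivAt_id' (𝕜 := ℝ) (x := x)).const_mul (a^2)
      have hq : HasDerivAt (fun τ : ℝ => b*(τ/2+1/4)) (b*(1/2)) x :=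
        ((hasDerivAt_id' (𝕜 := ℝ) (x := x)).div_const 2).add_const (1/4) |>.const_mul b
      have hp4 := hq.fun_mul (expD2 x)
      have hp5 := (((hasDerivAt_id' (𝕜 := ℝ) (x := x)).add_const (1:ℝ)).fun_mul (expD x)).const_mul (2*a*b)
      have hp6 := (hasDerivAt_pow 2 x).const_mul (a^2*b/2)
      have := ((((hp1.fun_add hp2).fun_add hp3).fun_add hp4).fun_sub hp5).fun_sub hp6
      try simp only [id_eq] at this
      exact this.congr_deriv (by push_cast; ring)
    rw [intervalIntegral.integral_eq_sub_of_hasDerivAt hder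
      (ii (((cexp.sub continuousOn_const).pow 2).mul cw))]
    simp [hadef]
    ring
  have I3 : (∫ τ in (0:ℝ)..L, (Real.exp (-τ) - a)^2)
      = 1/2 - 2*a + (3/2)*a^2 + a^2*L := by
    have hder : ∀ x ∈ uIcc (0:ℝ) L, HasDerivAt
        (fun τ => -(1/2)*(Real.exp (-τ))^2 + 2*a*Real.exp (-τ) + a^2*τ)
        ((Real.exp (-x) - a)^2) x := by
      intro x _
      have hp1 := (expD2 x).const_mul (-(1/2) : ℝ)
      have hp2 := (expD x).const_mul (2*a)
      have hp3 := (hasDerivAt_id' (𝕜 := ℝ) (x := x)).const_mul (a^2)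
      have := (hp1.fun_add hp2).fun_add hp3
      try simp only [id_eq] at this
      exact this.congr_deriv (by ring)
    rw [intervalIntegral.integral_eq_sub_of_hasDerivAt hder
      (ii ((cexp.sub continuousOn_const).pow 2))]
    simp [hadef]
    ring
  constructor
  · -- lower bound on D₀
    have hmono : (2/3) * (∫ τ in (0:ℝ)..L, (Real.exp (-τ) - a)^2)
        ≤ ∫ τ in (0:ℝ)..L, (Real.exp (-τ) - a)^2 * (1 - b*τ) := by
      have hmm := intervalIntegral.integral_mono_on
        (f := fun τ => (2/3 : ℝ)*(Real.exp (-τ) - a)^2)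
        (g := fun τ => (Real.exp (-τ) - a)^2 * (1 - b*τ)) hL0
        (ii (continuousOn_const.mul ((cexp.sub continuousOn_const).pow 2)))
        (ii (((cexp.sub continuousOn_const).pow 2).mul cw))
        (fun τ hτ => by
          have := mul_le_mul_of_nonneg_left (hw1 τ hτ) (sq_nonneg (Real.exp (-τ) - a))
          linarith)
      rwa [intervalIntegral.integral_const_mul] at hmm
    rw [I3] at hmono
    have haL0 : 0 ≤ a^2*L := by positivity
    linarith only [hmono, ha7, haL0, sq_nonneg a]
  · rw [I1, I2]
    have hb2 : b^2 ≤ 1/9 := by nlinarith only [sq_abs b, hb, habs]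
    have s1 : a*|b| ≤ a/3 := by nlinarith only [ha0.le, hb, habs]
    have s2 : a^2*L^2*|b| ≤ 4*(a*|b|) := by
      nlinarith only [haL2, mul_nonneg ha0.le habs]
    have s3 : -(a^2*b*L^2) ≤ a^2*L^2*|b| := by
      nlinarith only [neg_le_abs b, mul_nonneg (mul_nonneg ha0.le ha0.le) (sq_nonneg L)]
    have t1 : 2*a*b^2 ≤ (2/9)*a := by nlinarith only [ha0.le, hb2]
    have t2 : a^2*L ≤ a := by nlinarith only [ha0.le, haL]
    have t3 : -(a^2*b*L^2) ≤ (4/3)*a := by linarith only [s3, s2, s1]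
    have t4 : 0 ≤ a^2*b^2*(3*L/2+7/4+L^2/2) :=
      mul_nonneg (mul_nonneg (sq_nonneg a) (sq_nonneg b)) (by linarith only [hL, sq_nonneg L])
    linarith only [t1, t2, t3, t4, sq_nonneg b, ha0.le]

end WGSE2

set_option maxHeartbeats 1000000 in
theorem weighted_ground_state_expansion (ρ : ℝ) (hρ : ρ ∈ Set.Ioo (0 : ℝ) (1 / 2)) :
    ∃ C > (0 : ℝ), ∃ h₀ ∈ Set.Ioo (0 : ℝ) 1, ∀ h ∈ Set.Ioo (0 : ℝ) h₀, ∀ β : ℝ,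
      |β| * h ^ ((1 : ℝ) / 2 - ρ) < 1 / 3 → |β| * h ^ ρ < 1 / 3 →
        |lamBetaOne ρ h β - (-1 - β * h ^ ((1 : ℝ) / 2))| ≤
          C * (β ^ 2 * h + Real.exp (-h ^ (-ρ))) := by
  obtain ⟨hρ0, hρhalf⟩ := hρ
  have hh₀mem : ((1:ℝ)/2) ^ ((1:ℝ)/ρ) ∈ Set.Ioo (0:ℝ) 1 :=
    ⟨Real.rpow_pos_of_pos (by norm_num) _,
     Real.rpow_lt_one (by norm_num) (by norm_num) (by positivity)⟩
  refine ⟨16, by norm_num, ((1:ℝ)/2) ^ ((1:ℝ)/ρ), hh₀mem, ?_⟩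
  intro h hh β hβ1 hβ2
  obtain ⟨hh0, hh1⟩ := hh
  have hh1' : h < 1 := lt_trans hh1 hh₀mem.2
  set L := h ^ (-ρ) with hLdef
  set b := β * h ^ ((1:ℝ)/2) with hbdef
  have hlam : lamBetaOne ρ h β = sInf { r : ℝ | ∃ u : ℝ → ℝ,
      ContDiffOn ℝ 1 u (Set.Icc 0 L) ∧ u L = 0 ∧
      (∃ τ ∈ Set.Icc (0 : ℝ) L, u τ ≠ 0) ∧
      r = ((∫ τ in (0 : ℝ)..L, (derivWithin u (Set.Icc 0 L) τ) ^ 2 * (1 - b * τ)) - (u 0) ^ 2) /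
          ∫ τ in (0 : ℝ)..L, (u τ) ^ 2 * (1 - b * τ) } := rfl
  -- basic bounds
  have hpρ : 0 < h ^ ρ := Real.rpow_pos_of_pos hh0 ρ
  have hhρ : h ^ ρ < 1/2 := by
    have h1 : h ^ ρ < (((1:ℝ)/2) ^ ((1:ℝ)/ρ)) ^ ρ := Real.rpow_lt_rpow hh0.le hh1 hρ0
    have h2 : (((1:ℝ)/2) ^ ((1:ℝ)/ρ)) ^ ρ = (1:ℝ)/2 := by
      rw [← Real.rpow_mul (by norm_num : (0:ℝ) ≤ 1/2),
        show (1:ℝ)/ρ * ρ = 1 from by field_simp, Real.rpow_one]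
    rwa [h2] at h1
  have hL2 : 2 ≤ L := by
    rw [hLdef, Real.rpow_neg hh0.le]
    have h3 : (1:ℝ)/(1/2) ≤ 1/(h ^ ρ) := one_div_le_one_div_of_le hpρ hhρ.le
    rw [one_div (h ^ ρ)] at h3
    norm_num at h3
    exact h3
  have hL0 : (0:ℝ) < L := by linarith
  have hL0' : (0:ℝ) ≤ L := by linarith
  have hhmr1 : h ^ ((1:ℝ)/2 - ρ) ≤ 1 := Real.rpow_le_one hh0.le hh1'.le (by linarith)
  have hhmr0 : 0 ≤ h ^ ((1:ℝ)/2 - ρ) := (Real.rpow_pos_of_pos hh0 _).le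
  have habsb : |b| = |β| * h ^ ((1:ℝ)/2) := by
    rw [hbdef, abs_mul, abs_of_nonneg (Real.rpow_pos_of_pos hh0 ((1:ℝ)/2)).le]
  have hsplit : h ^ ((1:ℝ)/2) = h ^ ρ * h ^ ((1:ℝ)/2 - ρ) := by
    rw [← Real.rpow_add hh0, show ρ + ((1:ℝ)/2 - ρ) = (1:ℝ)/2 by ring]
  have hb13 : |b| ≤ 1/3 := by
    rw [habsb, hsplit]
    calc |β| * (h ^ ρ * h ^ ((1:ℝ)/2 - ρ)) = (|β| * h ^ ρ) * h ^ ((1:ℝ)/2 - ρ) := by ring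
      _ ≤ (1/3) * 1 := mul_le_mul hβ2.le hhmr1 hhmr0 (by norm_num)
      _ = 1/3 := by norm_num
  have hbL : |b| * L ≤ 1/3 := by
    rw [habsb, hLdef]
    have hmul : h ^ ((1:ℝ)/2) * h ^ (-ρ) = h ^ ((1:ℝ)/2 - ρ) := by
      rw [← Real.rpow_add hh0, show (1:ℝ)/2 + -ρ = (1:ℝ)/2 - ρ by ring]
    calc |β| * h ^ ((1:ℝ)/2) * (h ^ (-ρ)) = |β| * (h ^ ((1:ℝ)/2) * h ^ (-ρ)) := by ring
      _ = |β| * h ^ ((1:ℝ)/2 - ρ) := by rw [hmul]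
      _ ≤ 1/3 := hβ1.le
  have hb2h : b^2 = β^2 * h := by
    rw [hbdef]
    have hmul : h ^ ((1:ℝ)/2) * h ^ ((1:ℝ)/2) = h := by
      rw [← Real.rpow_add hh0, show (1:ℝ)/2 + (1:ℝ)/2 = (1:ℝ) by ring, Real.rpow_one]
    calc (β * h ^ ((1:ℝ)/2))^2 = β^2 * (h ^ ((1:ℝ)/2) * h ^ ((1:ℝ)/2)) := by ring
      _ = β^2 * h := by rw [hmul]
  rw [hlam, ← hb2h]
  clear_value L b
  clear hlam hβ1 hβ2 habsb hsplit hhmr1 hhmr0 hhρ hpρ hLdef hbdef hh1 hh1' hh0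
  have ha0 : 0 < Real.exp (-L) := Real.exp_pos _
  have ha1 : Real.exp (-L) < 1 := Real.exp_lt_one_iff.2 (by linarith only [hL0])
  obtain ⟨hD8, hE2⟩ := WGSE2.key_upper hL2 hb13 hbL
  have hDpos : 0 < ∫ τ in (0:ℝ)..L, (Real.exp (-τ) - Real.exp (-L))^2 * (1 - b*τ) := by
    linarith only [hD8]
  -- weight nonneg
  have hwnn : ∀ τ ∈ Icc (0:ℝ) L, 0 ≤ 1 - b*τ := by
    intro τ hτ
    have h1 : |b*τ| ≤ 1/3 := by
      rw [abs_mul, abs_of_nonneg hτ.1]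
      calc |b| * τ ≤ |b| * L := mul_le_mul_of_nonneg_left hτ.2 (abs_nonneg b)
        _ ≤ 1/3 := hbL
    have h2 := abs_le.1 h1
    linarith only [h2.1, h2.2]
  -- the trial function
  have hu0cd : ContDiffOn ℝ 1 (fun τ : ℝ => Real.exp (-τ) - Real.exp (-L)) (Icc 0 L) :=
    ((Real.contDiff_exp.comp contDiff_neg).sub contDiff_const).contDiffOn
  have hdW : ∀ τ ∈ Icc (0:ℝ) L,
      derivWithin (fun τ : ℝ => Real.exp (-τ) - Real.exp (-L)) (Icc 0 L) τ = -Real.exp (-τ) :=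
    fun τ hτ => (((WGSE2.expD τ).sub_const _).hasDerivWithinAt).derivWithin
      (uniqueDiffOn_Icc hL0 τ hτ)
  have hIcongr : (∫ τ in (0:ℝ)..L,
        (derivWithin (fun τ : ℝ => Real.exp (-τ) - Real.exp (-L)) (Icc 0 L) τ)^2 * (1 - b*τ))
      = ∫ τ in (0:ℝ)..L, (Real.exp (-τ))^2 * (1 - b*τ) := by
    apply intervalIntegral.integral_congr
    intro τ hτ
    rw [uIcc_of_le hL0'] at hτ
    simp only [hdW τ hτ]
    ring
  set r₀ : ℝ := ((∫ τ in (0:ℝ)..L, (Real.exp (-τ))^2 * (1 - b*τ)) - (1 - Real.exp (-L))^2) /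
      (∫ τ in (0:ℝ)..L, (Real.exp (-τ) - Real.exp (-L))^2 * (1 - b*τ)) with hr₀def
  have hmem : r₀ ∈ { r : ℝ | ∃ u : ℝ → ℝ,
      ContDiffOn ℝ 1 u (Set.Icc 0 L) ∧ u L = 0 ∧
      (∃ τ ∈ Set.Icc (0 : ℝ) L, u τ ≠ 0) ∧
      r = ((∫ τ in (0 : ℝ)..L, (derivWithin u (Set.Icc 0 L) τ) ^ 2 * (1 - b * τ)) - (u 0) ^ 2) /
          ∫ τ in (0 : ℝ)..L, (u τ) ^ 2 * (1 - b * τ) } := by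
    refine ⟨fun τ : ℝ => Real.exp (-τ) - Real.exp (-L), hu0cd, by simp, ⟨0, ⟨le_rfl, hL0'⟩, ?_⟩, ?_⟩
    · simp only [neg_zero, Real.exp_zero]
      intro hcon
      rw [sub_eq_zero] at hcon
      linarith only [hcon, ha1]
    · rw [hIcongr, hr₀def]
      norm_num
  -- lower bound for all elements
  have hlow : ∀ r ∈ { r : ℝ | ∃ u : ℝ → ℝ,
      ContDiffOn ℝ 1 u (Set.Icc 0 L) ∧ u L = 0 ∧
      (∃ τ ∈ Set.Icc (0 : ℝ) L, u τ ≠ 0) ∧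
      r = ((∫ τ in (0 : ℝ)..L, (derivWithin u (Set.Icc 0 L) τ) ^ 2 * (1 - b * τ)) - (u 0) ^ 2) /
          ∫ τ in (0 : ℝ)..L, (u τ) ^ 2 * (1 - b * τ) }, -(1 + b + 3*b^2) ≤ r := by
    rintro r ⟨u, hcd, huL, -, rfl⟩
    have hucont : ContinuousOn u (Icc 0 L) := hcd.continuousOn
    have hgcont : ContinuousOn (derivWithin u (Icc 0 L)) (Icc 0 L) :=
      hcd.continuousOn_derivWithin (uniqueDiffOn_Icc hL0) le_rfl
    have hder : ∀ x ∈ Icc (0:ℝ) L, HasDerivWithinAt u (derivWithin u (Icc 0 L) x) (Icc 0 L) x :=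
      fun x hx => ((hcd.differentiableOn one_ne_zero) x hx).hasDerivWithinAt
    have hkey := WGSE.key_lower hL2 hb13 hbL hucont hgcont hder huL
    have hDnn : 0 ≤ ∫ τ in (0:ℝ)..L, (u τ)^2 * (1 - b*τ) :=
      intervalIntegral.integral_nonneg hL0'
        (fun τ hτ => mul_nonneg (sq_nonneg _) (hwnn τ hτ))
    rcases hDnn.eq_or_lt with heq|hpos
    · rw [← heq, div_zero]
      have h2 := abs_le.1 hb13
      nlinarith only [sq_nonneg b, h2.1, h2.2]
    · rw [le_div_iff₀ hpos]
      exact hkey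
  have hbdd : BddBelow { r : ℝ | ∃ u : ℝ → ℝ,
      ContDiffOn ℝ 1 u (Set.Icc 0 L) ∧ u L = 0 ∧
      (∃ τ ∈ Set.Icc (0 : ℝ) L, u τ ≠ 0) ∧
      r = ((∫ τ in (0 : ℝ)..L, (derivWithin u (Set.Icc 0 L) τ) ^ 2 * (1 - b * τ)) - (u 0) ^ 2) /
          ∫ τ in (0 : ℝ)..L, (u τ) ^ 2 * (1 - b * τ) } := ⟨-(1 + b + 3*b^2), fun r hr => hlow r hr⟩
  have hge := le_csInf ⟨r₀, hmem⟩ hlow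
  have hle := csInf_le hbdd hmem
  -- upper bound on r₀
  have hr₀le : r₀ ≤ -1 - b + 16*(b^2 + Real.exp (-L)) := by
    rw [hr₀def, div_le_iff₀ hDpos]
    have hnn : 0 ≤ b^2 + Real.exp (-L) := by positivity
    have hkey := mul_nonneg hnn (by linarith only [hD8] :
      (0:ℝ) ≤ (∫ τ in (0:ℝ)..L, (Real.exp (-τ) - Real.exp (-L))^2 * (1 - b*τ)) - 1/8)
    nlinarith only [hE2, hkey]
  rw [abs_le]
  constructor
  · linarith only [hge, sq_nonneg b, ha0.le]
  · linarith only [hle, hr₀le]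
end
end

section
/- Let κ : ℝ → ℝ be a C^∞ function with κ''(0) < 0 and suppose there is δ > 0 such that κ(s) < κ(0) for all s ∈ (−δ,δ)\{0}. Then there exist δ' ∈ (0,δ] and a C^∞ function ϑ : (−δ',δ') → ℝ such that ϑ(0) = 0, ϑ'(0) = 0, ϑ'(s)² = κ(0) − κ(s) for all |s| < δ', s·ϑ'(s) > 0 for all s ∈ (−δ',δ')\{0}, and ϑ''(0) = √(−κ''(0)/2). -/
open Real Set
open scoped ContDiff

lemma one_le_infty : (1 : WithTop ℕ∞) ≤ ((⊤ : ℕ∞) : WithTop ℕ∞) := by exact_mod_cast le_top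

noncomputable section

open intervalIntegral MeasureTheory Metric

/-- The `n`-th auxiliary parametric integral in Hadamard's construction. -/
noncomputable def hadA (f : ℝ → ℝ) (n : ℕ) (s : ℝ) : ℝ :=
  ∫ t in (0:ℝ)..1, (1 - t) * t ^ n * (deriv^[n] f) (t * s)

lemma hadA_hasDerivAt (f : ℝ → ℝ) (hf : ContDiff ℝ ∞ f) (n : ℕ) (s₀ : ℝ) :
    HasDerivAt (hadA f n) (hadA f (n + 1) s₀) s₀ := by
  set g := deriv^[n] f with hgdef
  set g' := deriv^[n+1] f with hg'def
  have hgsm : ContDiff ℝ ∞ g := hf.iterate_deriv n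
  have hg'sm : ContDiff ℝ ∞ g' := hf.iterate_deriv (n+1)
  have hgc : Continuous g := hgsm.continuous
  have hg'c : Continuous g' := hg'sm.continuous
  have hgg' : ∀ y : ℝ, HasDerivAt g (g' y) y := by
    intro y
    have h := (hgsm.differentiable (by simp) y).hasDerivAt
    rwa [show deriv g y = g' y by
      rw [hg'def, Function.iterate_succ_apply']] at h
  -- bound for `g'` on a compact interval
  obtain ⟨C, hC⟩ := (isCompact_Icc (a := -(|s₀| + 1)) (b := |s₀| + 1)).exists_bound_of_continuousOn
    hg'c.continuousOn
  have key := intervalIntegral.hasDerivAt_integral_of_dominated_loc_of_deriv_le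
    (F := fun x t => (1 - t) * t ^ n * g (t * x))
    (F' := fun x t => (1 - t) * t ^ (n+1) * g' (t * x))
    (x₀ := s₀) (a := 0) (b := 1) (μ := volume) (bound := fun _ => C)
    (s := Metric.ball s₀ 1) (Metric.ball_mem_nhds s₀ one_pos)
    (Filter.Eventually.of_forall fun x =>
      (((continuous_const.sub continuous_id).mul (continuous_pow n)).mul
        (hgc.comp (continuous_id.mul continuous_const))).aestronglyMeasurable)
    ((((continuous_const.sub continuous_id).mul (continuous_pow n)).mul
        (hgc.comp (continuous_id.mul continuous_const))).intervalIntegrable 0 1)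
    ((((continuous_const.sub continuous_id).mul (continuous_pow (n+1))).mul
        (hg'c.comp (continuous_id.mul continuous_const))).aestronglyMeasurable)
    ?_ (intervalIntegrable_const) ?_
  · exact key.2
  · -- bound
    refine Filter.Eventually.of_forall fun t ht x hx => ?_
    rw [Set.uIoc_of_le (by norm_num : (0:ℝ) ≤ 1)] at ht
    have ht0 : 0 < t := ht.1
    have ht1 : t ≤ 1 := ht.2
    have hxle : |x| ≤ |s₀| + 1 := by
      have := mem_ball_iff_norm.mp hx
      rw [Real.norm_eq_abs] at this
      have := abs_sub_abs_le_abs_sub x s₀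
      linarith
    have htx : t * x ∈ Set.Icc (-(|s₀| + 1)) (|s₀| + 1) := by
      rw [Set.mem_Icc, ← abs_le, abs_mul]
      calc |t| * |x| ≤ 1 * (|s₀| + 1) := by
            apply mul_le_mul (by rw [abs_of_pos ht0]; exact ht1) hxle (abs_nonneg _) zero_le_one
        _ = |s₀| + 1 := one_mul _
    have h3 : |g' (t * x)| ≤ C := by
      have := hC _ htx; rwa [Real.norm_eq_abs] at this
    have h1 : |1 - t| ≤ 1 := by rw [abs_le]; constructor <;> linarith
    have h2 : |t| ^ (n+1) ≤ 1 := by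
      apply pow_le_one₀ (abs_nonneg _)
      rw [abs_of_pos ht0]; exact ht1
    calc ‖(1 - t) * t ^ (n+1) * g' (t * x)‖
        = |1 - t| * |t| ^ (n+1) * |g' (t * x)| := by
          rw [Real.norm_eq_abs, abs_mul, abs_mul, abs_pow]
      _ ≤ 1 * 1 * C := by
          apply mul_le_mul (mul_le_mul h1 h2 (by positivity) zero_le_one) h3
            (abs_nonneg _) (by norm_num)
      _ = C := by ring
  · -- differentiability in the parameter
    refine Filter.Eventually.of_forall fun t _ x _ => ?_
    have hin : HasDerivAt (fun x : ℝ => g (t * x)) (g' (t * x) * (t * 1)) x :=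
      (hgg' (t * x)).comp x ((hasDerivAt_id x).const_mul t)
    have := hin.const_mul ((1 - t) * t ^ n)
    exact this.congr_deriv (by ring)

lemma hadA_deriv (f : ℝ → ℝ) (hf : ContDiff ℝ ∞ f) (n : ℕ) :
    deriv (hadA f n) = hadA f (n + 1) :=
  funext fun s => (hadA_hasDerivAt f hf n s).deriv

lemma hadA_contDiff (f : ℝ → ℝ) (hf : ContDiff ℝ ∞ f) :
    ∀ (m n : ℕ), ContDiff ℝ (m : ℕ) (hadA f n) := by
  intro m
  induction m with
  | zero =>
    intro n
    have hdiff : Differentiable ℝ (hadA f n) := fun s => (hadA_hasDerivAt f hf n s).differentiableAt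
    exact contDiff_zero.mpr hdiff.continuous
  | succ m ih =>
    intro n
    rw [show ((m + 1 : ℕ) : WithTop ℕ∞) = (m : ℕ) + 1 by push_cast; ring]
    refine contDiff_succ_iff_deriv.mpr
      ⟨fun s => (hadA_hasDerivAt f hf n s).differentiableAt, ?_, ?_⟩
    · intro h; exact absurd h (by simp)
    · rw [hadA_deriv f hf n]; exact ih (n + 1)

lemma hadA_smooth (f : ℝ → ℝ) (hf : ContDiff ℝ ∞ f) (n : ℕ) :
    ContDiff ℝ ∞ (hadA f n) :=
  contDiff_infty.mpr fun m => hadA_contDiff f hf m n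

lemma hadA_taylor (κ : ℝ → ℝ) (hκ : ContDiff ℝ ∞ κ) (s : ℝ) :
    κ s - κ 0 - s * deriv κ 0 = s ^ 2 * hadA (deriv (deriv κ)) 0 s := by
  have hκd : Differentiable ℝ κ := hκ.differentiable (by simp)
  have hκ1 : ContDiff ℝ ∞ (deriv κ) := (contDiff_infty_iff_deriv.mp hκ).2
  have hκ1d : Differentiable ℝ (deriv κ) := hκ1.differentiable (by simp)
  have hκ2c : Continuous (deriv (deriv κ)) :=
    ((contDiff_infty_iff_deriv.mp hκ1).2).continuous
  set φ : ℝ → ℝ := fun t => κ (t * s) + (1 - t) * (s * deriv κ (t * s)) with hφdef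
  have hφ : ∀ t : ℝ, HasDerivAt φ ((1 - t) * (s ^ 2 * deriv (deriv κ) (t * s))) t := by
    intro t
    have h1 : HasDerivAt (fun t : ℝ => κ (t * s)) (deriv κ (t * s) * s) t :=
      (hκd (t * s)).hasDerivAt.comp t (hasDerivAt_mul_const s)
    have h2a : HasDerivAt (fun t : ℝ => 1 - t) (-1) t := by
      simpa using (hasDerivAt_id t).const_sub 1
    have h2b : HasDerivAt (fun t : ℝ => s * deriv κ (t * s))
        (s * (deriv (deriv κ) (t * s) * s)) t :=
      by have := ((hκ1d (t * s)).hasDerivAt.comp t (hasDerivAt_mul_const s)).const_mul s; exact this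
    have := h1.add (h2a.mul h2b)
    exact this.congr_deriv (by ring)
  have hint : IntervalIntegrable (fun t => (1 - t) * (s ^ 2 * deriv (deriv κ) (t * s)))
      volume 0 1 :=
    (((continuous_const.sub continuous_id).mul
      (continuous_const.mul (hκ2c.comp (continuous_id.mul continuous_const))))).intervalIntegrable 0 1
  have hFTC := intervalIntegral.integral_eq_sub_of_hasDerivAt (fun t _ => hφ t) hint
  have hre : (∫ t in (0:ℝ)..1, (1 - t) * (s ^ 2 * deriv (deriv κ) (t * s)))
      = s ^ 2 * hadA (deriv (deriv κ)) 0 s := by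
    rw [hadA, ← intervalIntegral.integral_const_mul]
    congr 1
    funext t
    simp only [Function.iterate_zero_apply, pow_zero, mul_one]
    ring
  rw [hre] at hFTC
  rw [hFTC, hφdef]
  simp
  ring

lemma hadA_zero_eval (f : ℝ → ℝ) : hadA f 0 0 = f 0 / 2 := by
  have h1 : (∫ t in (0:ℝ)..1, (1 - t)) = 1 / 2 := by
    rw [intervalIntegral.integral_sub intervalIntegrable_const
      (intervalIntegral.intervalIntegrable_id)]
    simp [integral_id]
    norm_num
  have : hadA f 0 0 = ∫ t in (0:ℝ)..1, (1 - t) * f 0 := by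
    rw [hadA]
    congr 1
    funext t
    simp
  rw [this, intervalIntegral.integral_mul_const, h1]
  ring

theorem eikonal_equation_solution (κ : ℝ → ℝ) (hκ : ContDiff ℝ (⊤ : ℕ∞) κ)
    (hκ'' : deriv (deriv κ) 0 < 0) (δ : ℝ) (hδ : 0 < δ)
    (hmax : ∀ s ∈ Set.Ioo (-δ) δ, s ≠ 0 → κ s < κ 0) :
    ∃ δ' : ℝ, 0 < δ' ∧ δ' ≤ δ ∧
      ∃ ϑ : ℝ → ℝ, ContDiffOn ℝ (⊤ : ℕ∞) ϑ (Set.Ioo (-δ') δ') ∧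
        ϑ 0 = 0 ∧ deriv ϑ 0 = 0 ∧
        (∀ s ∈ Set.Ioo (-δ') δ', (deriv ϑ s) ^ 2 = κ 0 - κ s) ∧
        (∀ s ∈ Set.Ioo (-δ') δ', s ≠ 0 → 0 < s * deriv ϑ s) ∧
        deriv (deriv ϑ) 0 = Real.sqrt (-(deriv (deriv κ) 0) / 2) := by
  have hκ' : ContDiff ℝ ∞ κ := hκ
  have hκ2 : ContDiff ℝ ∞ (deriv (deriv κ)) :=
    (contDiff_infty_iff_deriv.mp (contDiff_infty_iff_deriv.mp hκ').2).2
  -- the derivative of κ vanishes at 0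
  have hmem : Set.Ioo (-δ) δ ∈ nhds (0:ℝ) := Ioo_mem_nhds (by linarith) hδ
  have hloc : IsLocalMax κ 0 := by
    filter_upwards [hmem] with s hs
    by_cases h : s = 0
    · simp [h]
    · exact (hmax s hs h).le
  have hd0 : deriv κ 0 = 0 := hloc.deriv_eq_zero
  -- the Hadamard quotient
  set g : ℝ → ℝ := fun s => -(hadA (deriv (deriv κ)) 0 s) with hgdef
  have hgsm : ContDiff ℝ ∞ g := (hadA_smooth _ hκ2 0).neg
  have htaylor : ∀ s : ℝ, κ 0 - κ s = s ^ 2 * g s := by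
    intro s
    have := hadA_taylor κ hκ' s
    rw [hd0] at this
    simp only [hgdef]
    nlinarith [this]
  have hg0 : g 0 = -(deriv (deriv κ) 0) / 2 := by
    simp only [hgdef, hadA_zero_eval]
    ring
  have hgpos : ∀ s ∈ Set.Ioo (-δ) δ, 0 < g s := by
    intro s hs
    by_cases h : s = 0
    · rw [h, hg0]; linarith
    · have h1 : 0 < κ 0 - κ s := by linarith [hmax s hs h]
      have h2 : 0 < s ^ 2 := by positivity
      nlinarith [htaylor s]
  -- the phase function
  set p : ℝ → ℝ := fun u => u * Real.sqrt (g u) with hpdef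
  have hpc : Continuous p := continuous_id.mul (continuous_sqrt.comp hgsm.continuous)
  set ϑ : ℝ → ℝ := fun s => ∫ u in (0:ℝ)..s, p u with hϑdef
  have hϑderiv : ∀ s : ℝ, HasDerivAt ϑ (p s) s := fun s =>
    intervalIntegral.integral_hasDerivAt_right (hpc.intervalIntegrable 0 s)
      (hpc.stronglyMeasurableAtFilter _ _) hpc.continuousAt
  have hϑderiv' : deriv ϑ = p := funext fun s => (hϑderiv s).deriv
  refine ⟨δ, hδ, le_refl δ, ϑ, ?_, ?_, ?_, ?_, ?_, ?_⟩
  · -- smoothness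
    rw [contDiffOn_infty_iff_deriv_of_isOpen isOpen_Ioo]
    refine ⟨fun s _ => (hϑderiv s).differentiableAt.differentiableWithinAt, ?_⟩
    rw [hϑderiv']
    refine ContDiffOn.mul contDiffOn_id ?_
    intro s hs
    exact (hgsm.contDiffAt.sqrt (ne_of_gt (hgpos s hs))).contDiffWithinAt
  · simp [hϑdef]
  · rw [hϑderiv', hpdef]; simp
  · intro s hs
    rw [hϑderiv', hpdef]
    have := (hgpos s hs).le
    rw [mul_pow, Real.sq_sqrt this, htaylor s]
  · intro s hs hne
    rw [hϑderiv', hpdef]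
    have h1 : 0 < s ^ 2 := by positivity
    have h2 : 0 < Real.sqrt (g s) := Real.sqrt_pos.mpr (hgpos s hs)
    calc (0:ℝ) < s ^ 2 * Real.sqrt (g s) := by positivity
      _ = s * (s * Real.sqrt (g s)) := by ring
  · rw [hϑderiv']
    have hq : DifferentiableAt ℝ (fun u => Real.sqrt (g u)) 0 := by
      have h0 : g 0 ≠ 0 := by rw [hg0]; exact ne_of_gt (by linarith)
      exact ((hgsm.contDiffAt.sqrt h0).differentiableAt (by simp))
    have hP : HasDerivAt p (1 * Real.sqrt (g 0) + 0 * deriv (fun u => Real.sqrt (g u)) 0) 0 :=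
      (hasDerivAt_id 0).mul hq.hasDerivAt
    rw [hP.deriv]
    rw [hg0]
    ring_nf
end
end

section
/- Let δ' > 0 and let ϑ : (−δ',δ') → ℝ be a C^∞ function with ϑ'(0) = 0, ϑ'(s) ≠ 0 for all s ≠ 0, and ϑ''(0) ≠ 0. Then the function g(s) = (ϑ''(s) − ϑ''(0))/(2ϑ'(s)), a priori defined for s ≠ 0, extends to a C^∞ function on (−δ',δ'); and for every c₀ ∈ ℝ, the function ξ₀(s) = c₀·exp(−∫₀^s g(u) du) is the unique continuously differentiable function on (−δ',δ') with ξ₀(0) = c₀ that satisfies the transport equation 2ϑ'(s)·ξ₀'(s) + (ϑ''(s) − ϑ''(0))·ξ₀(s) = 0 for all s ∈ (−δ',δ'). -/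
open Real Set
open MeasureTheory

noncomputable section


lemma wkb_iter_smooth {δ : ℝ} {f : ℝ → ℝ}
    (hf : ContDiffOn ℝ (⊤ : ℕ∞) f (Set.Ioo (-δ) δ)) (k : ℕ) :
    ContDiffOn ℝ (⊤ : ℕ∞) (deriv^[k] f) (Set.Ioo (-δ) δ) := by
  induction k with
  | zero => exact hf
  | succ k ih =>
    rw [Function.iterate_succ_apply']
    exact ih.deriv_of_isOpen isOpen_Ioo (by simp)

lemma wkb_iter_hasDeriv {δ : ℝ} {f : ℝ → ℝ}
    (hf : ContDiffOn ℝ (⊤ : ℕ∞) f (Set.Ioo (-δ) δ)) (k : ℕ) :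
    ∀ x ∈ Set.Ioo (-δ) δ, HasDerivAt (deriv^[k] f) (deriv^[k+1] f x) x := by
  intro x hx
  have h1 : DifferentiableAt ℝ (deriv^[k] f) x :=
    ((wkb_iter_smooth hf k).differentiableOn (by simp)).differentiableAt
      (isOpen_Ioo.mem_nhds hx)
  have := h1.hasDerivAt
  rwa [show deriv^[k+1] f x = deriv (deriv^[k] f) x from by
    rw [Function.iterate_succ_apply']]

lemma wkb_maps {δ r : ℝ} (hr : 0 ≤ r) (hrδ : r < δ) {x : ℝ} (hx : |x| ≤ r) {t : ℝ}
    (ht : |t| ≤ 1) : t * x ∈ Set.Ioo (-δ) δ := by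
  have : |t * x| ≤ r := by
    rw [abs_mul]
    calc |t| * |x| ≤ 1 * r := mul_le_mul ht hx (abs_nonneg _) zero_le_one
    _ = r := one_mul r
  constructor <;> [linarith [neg_abs_le (t*x)]; linarith [le_abs_self (t*x)]]

lemma wkb_A_hasDeriv {δ : ℝ} {f : ℝ → ℝ}
    (hf : ContDiffOn ℝ (⊤ : ℕ∞) f (Set.Ioo (-δ) δ)) (k : ℕ) :
    ∀ s ∈ Set.Ioo (-δ) δ,
      HasDerivAt (fun x => ∫ t in (0:ℝ)..1, t ^ k * deriv^[k+1] f (t * x))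
        (∫ t in (0:ℝ)..1, t ^ (k+1) * deriv^[k+2] f (t * s)) s := by
  intro s hs
  have hsδ : |s| < δ := abs_lt.2 ⟨hs.1, hs.2⟩
  set ε : ℝ := (δ - |s|) / 2 with hε
  have hε0 : 0 < ε := by rw [hε]; linarith
  set r : ℝ := |s| + ε with hrdef
  have hr0 : 0 ≤ r := by have := abs_nonneg s; simp only [hrdef]; linarith
  have hrδ : r < δ := by simp only [hrdef, hε]; linarith
  have hball : ∀ x ∈ Metric.ball s ε, |x| ≤ r := by
    intro x hx
    have := mem_ball_iff_norm.1 hx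
    have : |x - s| < ε := this
    calc |x| = |x - s + s| := by ring_nf
    _ ≤ |x - s| + |s| := abs_add_le _ _
    _ ≤ r := by simp only [hrdef]; linarith
  have hIccsub : Set.Icc (-r) r ⊆ Set.Ioo (-δ) δ :=
    fun y hy => ⟨lt_of_lt_of_le (by linarith) hy.1, lt_of_le_of_lt hy.2 hrδ⟩
  -- bound
  obtain ⟨C, hC⟩ : ∃ C, ∀ y ∈ Set.Icc (-r) r, ‖deriv^[k+2] f y‖ ≤ C :=
    isCompact_Icc.exists_bound_of_continuousOn
      (((wkb_iter_smooth hf (k+2)).continuousOn).mono hIccsub)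
  have hmemball : ∀ x ∈ Metric.ball s ε, ∀ t ∈ Set.uIcc (0:ℝ) 1, t * x ∈ Set.Ioo (-δ) δ := by
    intro x hx t ht
    rw [Set.uIcc_of_le zero_le_one] at ht
    exact wkb_maps hr0 hrδ (hball x hx) (abs_le.2 ⟨by linarith [ht.1], ht.2⟩)
  have hcontF : ∀ x ∈ Metric.ball s ε, ∀ (j : ℕ),
      ContinuousOn (fun t : ℝ => t ^ j * deriv^[j+1] f (t * x)) (Set.uIcc (0:ℝ) 1) := by
    intro x hx j
    apply (continuousOn_pow j).mul
    exact ((wkb_iter_smooth hf (j+1)).continuousOn).comp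
      ((continuous_id.mul continuous_const).continuousOn) (fun t ht => hmemball x hx t ht)
  have hsball : s ∈ Metric.ball s ε := Metric.mem_ball_self hε0
  have key := intervalIntegral.hasDerivAt_integral_of_dominated_loc_of_deriv_le
    (μ := volume) (a := (0:ℝ)) (b := 1) (x₀ := s)
    (F := fun x t => t ^ k * deriv^[k+1] f (t * x))
    (F' := fun x t => t ^ (k+1) * deriv^[k+2] f (t * x))
    (bound := fun _ => |C|) (Metric.ball_mem_nhds s hε0)
    ?_ ?_ ?_ ?_ ?_ ?_
  · exact key.2
  · -- hF_meas
    filter_upwards [Metric.ball_mem_nhds s hε0] with x hx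
    exact ((hcontF x hx k).mono Set.uIoc_subset_uIcc).aestronglyMeasurable measurableSet_uIoc
  · exact (hcontF s hsball k).intervalIntegrable
  · exact (((hcontF s hsball (k+1))).mono Set.uIoc_subset_uIcc).aestronglyMeasurable
      measurableSet_uIoc
  · -- h_bound
    refine Filter.Eventually.of_forall (fun t => fun ht x hx => ?_)
    have ht' : t ∈ Set.uIcc (0:ℝ) 1 := Set.uIoc_subset_uIcc ht
    rw [Set.uIcc_of_le zero_le_one] at ht'
    have habs : |t| ≤ 1 := abs_le.2 ⟨by linarith [ht'.1], ht'.2⟩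
    have h1 : |t * x| ≤ r := by
      rw [abs_mul]
      have := mul_le_mul habs (hball x hx) (abs_nonneg _) zero_le_one
      linarith
    have htx : t * x ∈ Set.Icc (-r) r :=
      ⟨by linarith [neg_abs_le (t*x)], by linarith [le_abs_self (t*x)]⟩
    show ‖t ^ (k+1) * deriv^[k+2] f (t * x)‖ ≤ |C|
    rw [norm_mul, norm_pow]
    have hb1 : ‖t‖ ^ (k+1) ≤ 1 := pow_le_one₀ (norm_nonneg t) habs
    have hb2 : ‖deriv^[k+2] f (t * x)‖ ≤ |C| := (hC _ htx).trans (le_abs_self C)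
    have := mul_le_mul hb1 hb2 (norm_nonneg _) zero_le_one
    linarith
  · exact intervalIntegrable_const
  · -- h_diff
    refine Filter.Eventually.of_forall (fun t => fun ht x hx => ?_)
    have ht' : t ∈ Set.uIcc (0:ℝ) 1 := Set.uIoc_subset_uIcc ht
    have hmem : t * x ∈ Set.Ioo (-δ) δ := hmemball x hx t ht'
    have h1 : HasDerivAt (fun x : ℝ => deriv^[k+1] f (t * x))
        (deriv^[k+2] f (t * x) * t) x := by
      have := (wkb_iter_hasDeriv hf (k+1) (t*x) hmem).comp x
        ((hasDerivAt_id x).const_mul t)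
      simpa [Function.comp_def] using this
    have h2 := h1.const_mul (t ^ k)
    show HasDerivAt (fun x => t ^ k * deriv^[k+1] f (t * x)) (t ^ (k+1) * deriv^[k+2] f (t * x)) x
    refine h2.congr_deriv ?_
    ring

lemma wkb_A_smooth {δ : ℝ} {f : ℝ → ℝ}
    (hf : ContDiffOn ℝ (⊤ : ℕ∞) f (Set.Ioo (-δ) δ)) :
    ∀ (n k : ℕ), ContDiffOn ℝ n (fun x => ∫ t in (0:ℝ)..1, t ^ k * deriv^[k+1] f (t * x))
      (Set.Ioo (-δ) δ) := by
  intro n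
  induction n with
  | zero =>
    intro k
    rw [show ((0:ℕ) : WithTop ℕ∞) = 0 from rfl, contDiffOn_zero]
    exact fun x hx => (wkb_A_hasDeriv hf k x hx).continuousAt.continuousWithinAt
  | succ n ih =>
    intro k
    rw [show (((n+1:ℕ)) : WithTop ℕ∞) = (n : WithTop ℕ∞) + 1 by push_cast; ring,
      contDiffOn_succ_iff_deriv_of_isOpen isOpen_Ioo]
    refine ⟨fun x hx => (wkb_A_hasDeriv hf k x hx).differentiableAt.differentiableWithinAt,
      ?_, ?_⟩
    · intro h; exact absurd h (by simp)
    · exact (ih (k+1)).congr fun x hx => (wkb_A_hasDeriv hf k x hx).deriv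

lemma wkb_hadamard {δ : ℝ} (hδ : 0 < δ) {f : ℝ → ℝ}
    (hf : ContDiffOn ℝ (⊤ : ℕ∞) f (Set.Ioo (-δ) δ)) :
    ∃ a : ℝ → ℝ, ContDiffOn ℝ (⊤ : ℕ∞) a (Set.Ioo (-δ) δ) ∧
      a 0 = deriv f 0 ∧ ∀ s ∈ Set.Ioo (-δ) δ, f s - f 0 = s * a s := by
  refine ⟨fun x => ∫ t in (0:ℝ)..1, t ^ 0 * deriv^[1] f (t * x), ?_, ?_, ?_⟩
  · rw [show ((⊤ : ℕ∞) : WithTop ℕ∞) = (⊤ : ℕ∞) from rfl]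
    exact contDiffOn_infty.2 fun n => wkb_A_smooth hf n 0
  · simp
  · intro s hs
    have h0mem : (0:ℝ) ∈ Set.Ioo (-δ) δ := by constructor <;> linarith
    rcases eq_or_ne s 0 with rfl | hs0
    · simp
    · have husub : Set.uIcc (0:ℝ) s ⊆ Set.Ioo (-δ) δ :=
        Set.OrdConnected.uIcc_subset Set.ordConnected_Ioo h0mem hs
      have hftc : ∫ u in (0:ℝ)..s, deriv f u = f s - f 0 :=
        intervalIntegral.integral_eq_sub_of_hasDerivAt
          (fun x hx => by simpa using wkb_iter_hasDeriv hf 0 x (husub hx))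
          (((wkb_iter_smooth hf 1).continuousOn.mono (by simpa using husub)).intervalIntegrable)
      have hsub : ∫ t in (0:ℝ)..1, deriv f (t * s) = s⁻¹ • ∫ u in (0:ℝ)..s, deriv f u := by
        have := intervalIntegral.integral_comp_mul_right (fun u => deriv f u) hs0
          (a := (0:ℝ)) (b := 1)
        simpa using this
      simp only [pow_zero, one_mul, Function.iterate_one]
      rw [hsub, hftc, smul_eq_mul]
      field_simp

theorem transport_equation_solution (δ' : ℝ) (hδ' : 0 < δ')
    (ϑ : ℝ → ℝ) (hϑ : ContDiffOn ℝ (⊤ : ℕ∞) ϑ (Set.Ioo (-δ') δ'))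
    (h0 : deriv ϑ 0 = 0)
    (hne : ∀ s ∈ Set.Ioo (-δ') δ', s ≠ 0 → deriv ϑ s ≠ 0)
    (h2 : deriv (deriv ϑ) 0 ≠ 0) :
    ∃ g : ℝ → ℝ, ContDiffOn ℝ (⊤ : ℕ∞) g (Set.Ioo (-δ') δ') ∧
      (∀ s ∈ Set.Ioo (-δ') δ', s ≠ 0 →
        g s = (deriv (deriv ϑ) s - deriv (deriv ϑ) 0) / (2 * deriv ϑ s)) ∧
      ∀ c₀ : ℝ,
        ((fun s : ℝ => c₀ * Real.exp (-(∫ u in (0 : ℝ)..s, g u))) 0 = c₀) ∧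
        ContDiffOn ℝ 1 (fun s : ℝ => c₀ * Real.exp (-(∫ u in (0 : ℝ)..s, g u)))
          (Set.Ioo (-δ') δ') ∧
        (∀ s ∈ Set.Ioo (-δ') δ',
          2 * deriv ϑ s * deriv (fun s : ℝ => c₀ * Real.exp (-(∫ u in (0 : ℝ)..s, g u))) s
            + (deriv (deriv ϑ) s - deriv (deriv ϑ) 0) *
                (fun s : ℝ => c₀ * Real.exp (-(∫ u in (0 : ℝ)..s, g u))) s = 0) ∧
        (∀ ξ : ℝ → ℝ, ContDiffOn ℝ 1 ξ (Set.Ioo (-δ') δ') → ξ 0 = c₀ →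
          (∀ s ∈ Set.Ioo (-δ') δ',
            2 * deriv ϑ s * deriv ξ s
              + (deriv (deriv ϑ) s - deriv (deriv ϑ) 0) * ξ s = 0) →
          ∀ s ∈ Set.Ioo (-δ') δ',
            ξ s = c₀ * Real.exp (-(∫ u in (0 : ℝ)..s, g u))) := by
  have hopen : IsOpen (Set.Ioo (-δ') δ') := isOpen_Ioo
  have h0mem : (0:ℝ) ∈ Set.Ioo (-δ') δ' := by constructor <;> linarith
  have hf1 : ContDiffOn ℝ (⊤:ℕ∞) (deriv ϑ) (Set.Ioo (-δ') δ') :=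
    hϑ.deriv_of_isOpen hopen (by simp)
  have hf2 : ContDiffOn ℝ (⊤:ℕ∞) (deriv (deriv ϑ)) (Set.Ioo (-δ') δ') :=
    hf1.deriv_of_isOpen hopen (by simp)
  obtain ⟨a, haS, ha0, haF⟩ := wkb_hadamard hδ' hf1
  have haF' : ∀ s ∈ Set.Ioo (-δ') δ', deriv ϑ s = s * a s := by
    intro s hs; have := haF s hs; rw [h0] at this; linarith
  obtain ⟨b, hbS, hb0, hbF⟩ := wkb_hadamard hδ'
    (f := fun s => deriv (deriv ϑ) s - deriv (deriv ϑ) 0) (hf2.sub contDiffOn_const)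
  have hbF' : ∀ s ∈ Set.Ioo (-δ') δ', deriv (deriv ϑ) s - deriv (deriv ϑ) 0 = s * b s := by
    intro s hs; have := hbF s hs; simpa using this
  have hane : ∀ s ∈ Set.Ioo (-δ') δ', a s ≠ 0 := by
    intro s hs
    rcases eq_or_ne s 0 with rfl | hs0
    · rw [ha0]; exact h2
    · intro h; exact hne s hs hs0 (by rw [haF' s hs, h, mul_zero])
  refine ⟨fun s => b s / (2 * a s), ?_, ?_, ?_⟩
  · exact hbS.div (contDiffOn_const.mul haS) (fun s hs => mul_ne_zero two_ne_zero (hane s hs))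
  · intro s hs hs0
    rw [hbF' s hs, haF' s hs]
    have ha := hane s hs
    field_simp
  · intro c₀
    set g : ℝ → ℝ := fun s => b s / (2 * a s) with hgdef
    have hgcont : ContinuousOn g (Set.Ioo (-δ') δ') :=
      (hbS.div (contDiffOn_const.mul haS)
        (fun s hs => mul_ne_zero two_ne_zero (hane s hs))).continuousOn
    have hG : ∀ s ∈ Set.Ioo (-δ') δ',
        HasDerivAt (fun x => ∫ u in (0:ℝ)..x, g u) (g s) s := by
      intro s hs
      exact intervalIntegral.integral_hasDerivAt_right
        ((hgcont.mono
          (Set.OrdConnected.uIcc_subset Set.ordConnected_Ioo h0mem hs)).intervalIntegrable)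
        (ContinuousAt.stronglyMeasurableAtFilter hopen
          (fun x hx => hgcont.continuousAt (hopen.mem_nhds hx)) s hs)
        (hgcont.continuousAt (hopen.mem_nhds hs))
    have hξd : ∀ s ∈ Set.Ioo (-δ') δ',
        HasDerivAt (fun s : ℝ => c₀ * Real.exp (-(∫ u in (0 : ℝ)..s, g u)))
          (-(g s) * (c₀ * Real.exp (-(∫ u in (0 : ℝ)..s, g u)))) s := by
      intro s hs
      have h1 := (((hG s hs).neg).exp).const_mul c₀
      refine h1.congr_deriv ?_
      simp only [Pi.neg_apply]
      ring
    have hξcont : ContinuousOn (fun s : ℝ => c₀ * Real.exp (-(∫ u in (0 : ℝ)..s, g u)))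
        (Set.Ioo (-δ') δ') :=
      fun s hs => (hξd s hs).continuousAt.continuousWithinAt
    refine ⟨by simp, ?_, ?_, ?_⟩
    · -- C¹ regularity
      rw [show (1 : WithTop ℕ∞) = (0 : ℕ∞) + 1 from rfl,
        contDiffOn_succ_iff_deriv_of_isOpen hopen]
      refine ⟨fun x hx => (hξd x hx).differentiableAt.differentiableWithinAt, ?_, ?_⟩
      · intro h; exact absurd h (by simp)
      · rw [show ((0:ℕ∞) : WithTop ℕ∞) = 0 from rfl, contDiffOn_zero]
        exact ((hgcont.neg.mul hξcont)).congr fun x hx => (hξd x hx).deriv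
    · -- the ODE
      intro s hs
      rw [(hξd s hs).deriv, haF' s hs, hbF' s hs]
      have ha := hane s hs
      simp only [hgdef]
      field_simp
      ring
    · -- uniqueness
      intro ξ hξS hξ0 hodeξ
      have hder : ∀ s ∈ Set.Ioo (-δ') δ', HasDerivAt ξ (deriv ξ s) s := fun s hs =>
        ((hξS.differentiableOn (by simp)).differentiableAt (hopen.mem_nhds hs)).hasDerivAt
      have hφcont : ContinuousOn (fun s => deriv ξ s + g s * ξ s) (Set.Ioo (-δ') δ') :=
        (hξS.continuousOn_deriv_of_isOpen hopen (le_refl _)).add (hgcont.mul hξS.continuousOn)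
      have hφne : ∀ s ∈ Set.Ioo (-δ') δ', s ≠ 0 → deriv ξ s + g s * ξ s = 0 := by
        intro s hs hs0
        have hE := hodeξ s hs
        rw [haF' s hs, hbF' s hs] at hE
        have hE2 : s * (2 * a s * deriv ξ s + b s * ξ s) = 0 := by linear_combination hE
        have hE3 : 2 * a s * deriv ξ s + b s * ξ s = 0 := (mul_eq_zero.1 hE2).resolve_left hs0
        have ha := hane s hs
        simp only [hgdef]
        field_simp
        linear_combination hE3
      have hφ : ∀ s ∈ Set.Ioo (-δ') δ', deriv ξ s + g s * ξ s = 0 := by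
        intro s hs
        rcases eq_or_ne s 0 with rfl | hs0
        · have hnb : Filter.NeBot (nhdsWithin 0 (Set.Ioo (-δ') δ' \ {0})) := by
            rw [← mem_closure_iff_nhdsWithin_neBot]
            apply closure_mono (show Set.Ioo (0:ℝ) δ' ⊆ Set.Ioo (-δ') δ' \ {0} from
              fun x hx => ⟨⟨by linarith [hx.1], hx.2⟩, by simp [ne_of_gt hx.1]⟩)
            rw [closure_Ioo (ne_of_lt hδ')]
            exact ⟨le_refl _, le_of_lt hδ'⟩
          have t1 : Filter.Tendsto (fun s => deriv ξ s + g s * ξ s)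
              (nhdsWithin 0 (Set.Ioo (-δ') δ' \ {0})) (nhds (deriv ξ 0 + g 0 * ξ 0)) :=
            (hφcont 0 h0mem).mono_left (nhdsWithin_mono _ Set.diff_subset)
          have t2 : Filter.Tendsto (fun s => deriv ξ s + g s * ξ s)
              (nhdsWithin 0 (Set.Ioo (-δ') δ' \ {0})) (nhds 0) := by
            apply Filter.Tendsto.congr' _ tendsto_const_nhds
            filter_upwards [self_mem_nhdsWithin] with x hx
            exact (hφne x hx.1 (by simpa using hx.2)).symm
          exact tendsto_nhds_unique t1 t2
        · exact hφne s hs hs0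
      have hH : ∀ s ∈ Set.Ioo (-δ') δ',
          HasDerivAt (fun s => ξ s * Real.exp (∫ u in (0:ℝ)..s, g u)) 0 s := by
        intro s hs
        have h1 := (hder s hs).mul ((hG s hs).exp)
        refine h1.congr_deriv (Eq.symm ?_)
        linear_combination (-(Real.exp (∫ u in (0:ℝ)..s, g u))) * (hφ s hs)
      intro s hs
      have hsub : Set.uIcc (0:ℝ) s ⊆ Set.Ioo (-δ') δ' :=
        Set.OrdConnected.uIcc_subset Set.ordConnected_Ioo h0mem hs
      have hHcont : ContinuousOn (fun s => ξ s * Real.exp (∫ u in (0:ℝ)..s, g u))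
          (Set.Ioo (-δ') δ') := fun x hx => (hH x hx).continuousAt.continuousWithinAt
      have hconst : ξ s * Real.exp (∫ u in (0:ℝ)..s, g u)
          = ξ 0 * Real.exp (∫ u in (0:ℝ)..(0:ℝ), g u) := by
        rcases le_or_gt 0 s with h | h
        · have hIcc : Set.Icc (0:ℝ) s ⊆ Set.Ioo (-δ') δ' := by
            rw [← Set.uIcc_of_le h]; exact hsub
          have := constant_of_has_deriv_right_zero (hHcont.mono hIcc)
            (fun x hx => (hH x (hIcc ⟨hx.1, le_of_lt hx.2⟩)).hasDerivWithinAt)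
          exact this s ⟨h, le_refl s⟩
        · have hIcc : Set.Icc s (0:ℝ) ⊆ Set.Ioo (-δ') δ' := by
            rw [← Set.uIcc_of_ge (le_of_lt h)]; exact hsub
          have := constant_of_has_deriv_right_zero (hHcont.mono hIcc)
            (fun x hx => (hH x (hIcc ⟨hx.1, le_of_lt hx.2⟩)).hasDerivWithinAt)
          exact (this 0 ⟨le_of_lt h, le_refl _⟩).symm
      rw [hξ0] at hconst
      simp only [intervalIntegral.integral_same, Real.exp_zero, mul_one] at hconst
      have hepos : Real.exp (∫ u in (0:ℝ)..s, g u) ≠ 0 := (Real.exp_pos _).ne'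
      rw [Real.exp_neg]
      field_simp
      linear_combination hconst
end
end

section
/- Let ρ ∈ (0,1/2) and let χ : [0,∞) → [0,1] be a C^∞ function with χ = 1 on [0,1/4] and χ = 0 on [1/2,∞). There exist constants C > 0 and h₀ ∈ (0,1) such that for all h ∈ (0,h₀) and all β ∈ ℝ with |β|h^{1/2−ρ} < 1/3, the function f(τ) = χ(τ·h^{ρ})·√2·e^{−τ} on [0, h^{−ρ}] satisfies: f'(0) = −f(0), f(h^{−ρ}) = 0, ∫₀^{h^{−ρ}} |−f''(τ) + βh^{1/2}(1 − βh^{1/2}τ)^{−1}f'(τ) + (1 + βh^{1/2})f(τ)|²·(1 − βh^{1/2}τ) dτ ≤ C·(β⁴h² + exp(−h^{−ρ}/4)), and |∫₀^{h^{−ρ}} f(τ)²·(1 − βh^{1/2}τ) dτ − 1| ≤ C·(|β|h^{1/2} + exp(−h^{−ρ}/4)). -/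
open MeasureTheory Real Set

noncomputable section

lemma dw_zero {F : ℝ → ℝ} {c x r : ℝ} (hx : x ∈ Set.Ico (0:ℝ) r)
    (hF : ∀ y ∈ Set.Ico (0:ℝ) r, F y = c) : derivWithin F (Set.Ici 0) x = 0 := by
  have hmem : Set.Ici (0:ℝ) ∩ Set.Iio r ∈ nhdsWithin x (Set.Ici 0) :=
    inter_mem_nhdsWithin _ (Iio_mem_nhds hx.2)
  have heq : F =ᶠ[nhdsWithin x (Set.Ici 0)] (fun _ => c) :=
    Filter.eventuallyEq_of_mem hmem (fun y hy => hF y ⟨hy.1, hy.2⟩)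
  rw [heq.derivWithin_eq (hF x hx), derivWithin_fun_const]
  rfl

lemma exp_int (c b : ℝ) : ∫ τ in c..b, Real.exp (-2*τ) = (Real.exp (-2*c) - Real.exp (-2*b))/2 := by
  have H : ∀ τ : ℝ, HasDerivAt (fun τ : ℝ => -Real.exp (-2*τ)/2) (Real.exp (-2*τ)) τ := by
    intro τ
    have := (((hasDerivAt_id τ).const_mul (-2)).exp).neg.div_const 2
    refine this.congr_deriv ?_
    simp
  rw [intervalIntegral.integral_eq_sub_of_hasDerivAt (fun x _ => H x)
    ((Real.continuous_exp.comp (continuous_const.mul continuous_id')).intervalIntegrable c b)]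
  ring

lemma t2exp_int (b : ℝ) (hb : 0 ≤ b) : ∫ τ in (0:ℝ)..b, τ^2 * Real.exp (-2*τ) ≤ 1/4 := by
  have H : ∀ τ : ℝ, HasDerivAt (fun τ : ℝ => -((2*τ^2+2*τ+1) * Real.exp (-2*τ))/4)
      (τ^2 * Real.exp (-2*τ)) τ := by
    intro τ
    have hp : HasDerivAt (fun τ : ℝ => 2*τ^2+2*τ+1) (4*τ+2) τ := by
      have := (((hasDerivAt_pow 2 τ).const_mul 2).add ((hasDerivAt_id τ).const_mul 2)).add_const 1
      refine this.congr_deriv ?_; ring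
    have he : HasDerivAt (fun τ : ℝ => Real.exp (-2*τ)) (Real.exp (-2*τ) * (-2)) τ := by
      simpa using ((hasDerivAt_id τ).const_mul (-2)).exp
    have := (hp.mul he).neg.div_const 4
    refine this.congr_deriv ?_
    ring
  rw [intervalIntegral.integral_eq_sub_of_hasDerivAt (fun x _ => H x)
    ((continuous_pow 2 |>.mul (Real.continuous_exp.comp (continuous_const.mul continuous_id'))).intervalIntegrable 0 b)]
  norm_num
  nlinarith [Real.exp_pos (-(2*b)), sq_nonneg b, hb, mul_nonneg (mul_nonneg hb hb) (Real.exp_pos (-(2*b))).le, mul_nonneg hb (Real.exp_pos (-(2*b))).le]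

lemma texp_int (b : ℝ) (hb : 0 ≤ b) : ∫ τ in (0:ℝ)..b, τ * Real.exp (-2*τ) ≤ 1/4 := by
  have H : ∀ τ : ℝ, HasDerivAt (fun τ : ℝ => -((2*τ+1) * Real.exp (-2*τ))/4)
      (τ * Real.exp (-2*τ)) τ := by
    intro τ
    have hp : HasDerivAt (fun τ : ℝ => 2*τ+1) 2 τ := by
      simpa using ((hasDerivAt_id τ).const_mul 2).add_const 1
    have he : HasDerivAt (fun τ : ℝ => Real.exp (-2*τ)) (Real.exp (-2*τ) * (-2)) τ := by
      simpa using ((hasDerivAt_id τ).const_mul (-2)).exp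
    have := (hp.mul he).neg.div_const 4
    refine this.congr_deriv ?_
    ring
  rw [intervalIntegral.integral_eq_sub_of_hasDerivAt (fun x _ => H x)
    ((continuous_id.mul (Real.continuous_exp.comp (continuous_const.mul continuous_id'))).intervalIntegrable 0 b)]
  norm_num
  nlinarith [Real.exp_pos (-(2*b)), hb, mul_nonneg hb (Real.exp_pos (-(2*b))).le]

set_option maxHeartbeats 2000000 in
theorem quasimode_estimates (ρ : ℝ) (hρ : ρ ∈ Set.Ioo (0 : ℝ) (1 / 2))
    (χ : ℝ → ℝ) (hχ : ContDiffOn ℝ (⊤ : ℕ∞) χ (Set.Ici 0))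
    (hχ01 : ∀ x ∈ Set.Ici (0 : ℝ), χ x ∈ Set.Icc (0 : ℝ) 1)
    (hχ1 : ∀ x ∈ Set.Icc (0 : ℝ) (1 / 4), χ x = 1)
    (hχ0 : ∀ x ∈ Set.Ici (1 / 2 : ℝ), χ x = 0) :
    ∃ C > (0 : ℝ), ∃ h₀ ∈ Set.Ioo (0 : ℝ) 1, ∀ h ∈ Set.Ioo (0 : ℝ) h₀, ∀ β : ℝ,
      |β| * h ^ ((1 : ℝ) / 2 - ρ) < 1 / 3 →
      let f : ℝ → ℝ := fun τ => χ (τ * h ^ ρ) * (Real.sqrt 2 * Real.exp (-τ))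
      let f' : ℝ → ℝ := derivWithin f (Set.Ici 0)
      let f'' : ℝ → ℝ := derivWithin f' (Set.Ici 0)
      f' 0 = -f 0 ∧
      f (h ^ (-ρ)) = 0 ∧
      (∫ τ in (0 : ℝ)..(h ^ (-ρ)),
          |(-f'' τ) + β * h ^ ((1 : ℝ) / 2) * (1 - β * h ^ ((1 : ℝ) / 2) * τ)⁻¹ * f' τ
            + (1 + β * h ^ ((1 : ℝ) / 2)) * f τ| ^ 2 * (1 - β * h ^ ((1 : ℝ) / 2) * τ)) ≤
        C * (β ^ 4 * h ^ 2 + Real.exp (-h ^ (-ρ) / 4)) ∧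
      |(∫ τ in (0 : ℝ)..(h ^ (-ρ)), (f τ) ^ 2 * (1 - β * h ^ ((1 : ℝ) / 2) * τ)) - 1| ≤
        C * (|β| * h ^ ((1 : ℝ) / 2) + Real.exp (-h ^ (-ρ) / 4)) := by
  obtain ⟨hρ0, hρ2⟩ := hρ
  have hUD : UniqueDiffOn ℝ (Set.Ici (0:ℝ)) := uniqueDiffOn_Ici 0
  set φ := derivWithin χ (Set.Ici 0) with hφdef
  set φ₂ := derivWithin φ (Set.Ici 0) with hφ₂def
  have hφcd : ContDiffOn ℝ (⊤:ℕ∞) φ (Set.Ici 0) := hχ.derivWithin hUD (by simp)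
  have hφ₂cd : ContDiffOn ℝ (⊤:ℕ∞) φ₂ (Set.Ici 0) := hφcd.derivWithin hUD (by simp)
  have hφ0 : ∀ x ∈ Set.Ico (0:ℝ) (1/4), φ x = 0 := fun x hx =>
    dw_zero hx (fun y hy => hχ1 y ⟨hy.1, hy.2.le⟩)
  have hφ₂0 : ∀ x ∈ Set.Ico (0:ℝ) (1/4), φ₂ x = 0 := fun x hx => dw_zero hx hφ0
  obtain ⟨M₁, hM₁⟩ := (isCompact_Icc (a:=(0:ℝ)) (b:=1)).exists_bound_of_continuousOn
    (hφcd.continuousOn.mono (Icc_subset_Ici_self))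
  obtain ⟨M₂, hM₂⟩ := (isCompact_Icc (a:=(0:ℝ)) (b:=1)).exists_bound_of_continuousOn
    (hφ₂cd.continuousOn.mono (Icc_subset_Ici_self))
  set M := max 1 (max M₁ M₂) with hMdef
  have hM1 : (1:ℝ) ≤ M := le_max_left _ _
  have hMφ : ∀ x ∈ Set.Icc (0:ℝ) 1, |φ x| ≤ M := fun x hx =>
    le_trans (le_trans (le_of_eq (Real.norm_eq_abs _).symm) (hM₁ x hx))
      (le_trans (le_max_left _ _) (le_max_right _ _))
  have hMφ₂ : ∀ x ∈ Set.Icc (0:ℝ) 1, |φ₂ x| ≤ M := fun x hx =>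
    le_trans (le_trans (le_of_eq (Real.norm_eq_abs _).symm) (hM₂ x hx))
      (le_trans (le_max_right _ _) (le_max_right _ _))
  refine ⟨100*M^2, by nlinarith, 1/2, ⟨by norm_num, by norm_num⟩, ?_⟩
  intro h hh β hβ
  obtain ⟨hh0, hh2⟩ := hh
  have hh1 : h < 1 := lt_trans hh2 (by norm_num)
  intro f f' f''
  set ε := h ^ ρ with hεdef
  set a := h ^ (-ρ) with hadef
  set s := β * h ^ ((1:ℝ)/2) with hsdef
  have hε0 : 0 < ε := Real.rpow_pos_of_pos hh0 ρ
  have hε1 : ε ≤ 1 := Real.rpow_le_one hh0.le hh1.le hρ0.le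
  have ha0 : 0 < a := Real.rpow_pos_of_pos hh0 _
  have ha1 : 1 ≤ a := Real.one_le_rpow_of_pos_of_le_one_of_nonpos hh0 hh1.le (by linarith)
  have hεa : a * ε = 1 := by
    rw [hεdef, hadef, ← Real.rpow_add hh0]
    simp
  have habs : |s| = |β| * h ^ ((1:ℝ)/2) := by
    rw [hsdef, abs_mul, abs_of_nonneg (Real.rpow_nonneg hh0.le _)]
  have hsa : |s| * a < 1/3 := by
    rw [habs, hadef, mul_assoc, ← Real.rpow_add hh0]
    have e : (1:ℝ)/2 + -ρ = 1/2 - ρ := by ring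
    rw [e]
    exact hβ
  have hs3 : |s| < 1/3 := by
    calc |s| = |s| * 1 := (mul_one _).symm
    _ ≤ |s| * a := by
      apply mul_le_mul_of_nonneg_left ha1 (abs_nonneg s)
    _ < 1/3 := hsa
  -- weight bounds
  have hw23 : ∀ τ ∈ Set.Icc (0:ℝ) a, 2/3 ≤ 1 - s*τ := by
    intro τ hτ
    have h1 : |s*τ| ≤ |s| * a := by
      rw [abs_mul, abs_of_nonneg hτ.1]
      exact mul_le_mul_of_nonneg_left hτ.2 (abs_nonneg s)
    have := abs_le.1 (le_of_lt (lt_of_le_of_lt h1 hsa))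
    linarith [this.1, this.2]
  have hw43 : ∀ τ ∈ Set.Icc (0:ℝ) a, 1 - s*τ ≤ 4/3 := by
    intro τ hτ
    have h1 : |s*τ| ≤ |s| * a := by
      rw [abs_mul, abs_of_nonneg hτ.1]
      exact mul_le_mul_of_nonneg_left hτ.2 (abs_nonneg s)
    have := abs_le.1 (le_of_lt (lt_of_le_of_lt h1 hsa))
    linarith [this.1, this.2]
  -- derivative formulas
  set g : ℝ → ℝ := fun τ => Real.sqrt 2 * Real.exp (-τ) with hgdef
  have hg : ∀ τ : ℝ, HasDerivAt g (-g τ) τ := by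
    intro τ
    have := (((hasDerivAt_id τ).neg).exp).const_mul (Real.sqrt 2)
    refine this.congr_deriv ?_
    simp [hgdef]
  have hfdef : f = fun τ => χ (τ * ε) * g τ := rfl
  have hchain : ∀ τ ∈ Set.Ici (0:ℝ),
      HasDerivWithinAt (fun t => χ (t * ε)) (φ (τ*ε) * ε) (Set.Ici 0) τ := by
    intro τ hτ
    have h1 : HasDerivWithinAt χ (φ (τ*ε)) (Set.Ici 0) (τ*ε) := by
      rw [hφdef]
      exact ((hχ.differentiableOn (by simp)) (τ*ε) (mul_nonneg hτ hε0.le)).hasDerivWithinAt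
    have h2 : HasDerivWithinAt (fun t : ℝ => t * ε) ε (Set.Ici 0) τ :=
      (hasDerivAt_mul_const ε).hasDerivWithinAt
    exact h1.comp τ h2 (fun y hy => mul_nonneg hy hε0.le)
  have hφchain : ∀ τ ∈ Set.Ici (0:ℝ),
      HasDerivWithinAt (fun t => φ (t * ε)) (φ₂ (τ*ε) * ε) (Set.Ici 0) τ := by
    intro τ hτ
    have h1 : HasDerivWithinAt φ (φ₂ (τ*ε)) (Set.Ici 0) (τ*ε) := by
      rw [hφ₂def]
      exact ((hφcd.differentiableOn (by simp)) (τ*ε) (mul_nonneg hτ hε0.le)).hasDerivWithinAt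
    have h2 : HasDerivWithinAt (fun t : ℝ => t * ε) ε (Set.Ici 0) τ :=
      (hasDerivAt_mul_const ε).hasDerivWithinAt
    exact h1.comp τ h2 (fun y hy => mul_nonneg hy hε0.le)
  set f1 : ℝ → ℝ := fun τ => ε * φ (τ*ε) * g τ - χ (τ*ε) * g τ with hf1def
  have hf1 : ∀ τ ∈ Set.Ici (0:ℝ), HasDerivWithinAt f (f1 τ) (Set.Ici 0) τ := by
    intro τ hτ
    have H := (hchain τ hτ).mul (hg τ).hasDerivWithinAt
    have H2 := H.congr (f₁ := f) (fun y _ => by rw [hfdef]; rfl) (by rw [hfdef]; rfl)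
    refine H2.congr_deriv ?_
    simp only [hf1def]
    ring
  have hf'eq : ∀ τ ∈ Set.Ici (0:ℝ), f' τ = f1 τ := fun τ hτ =>
    (hf1 τ hτ).derivWithin (hUD τ hτ)
  set f2 : ℝ → ℝ := fun τ => ε^2 * φ₂ (τ*ε) * g τ - 2*ε*φ (τ*ε) * g τ + χ (τ*ε) * g τ
    with hf2def
  have hf2 : ∀ τ ∈ Set.Ici (0:ℝ), HasDerivWithinAt f1 (f2 τ) (Set.Ici 0) τ := by
    intro τ hτ
    have H := (((hφchain τ hτ).mul (hg τ).hasDerivWithinAt).const_mul ε).sub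
      ((hchain τ hτ).mul (hg τ).hasDerivWithinAt)
    have H2 := H.congr (f₁ := f1) (fun y _ => by simp only [hf1def, Pi.sub_apply, Pi.mul_apply]; ring)
      (by simp only [hf1def, Pi.sub_apply, Pi.mul_apply]; ring)
    refine H2.congr_deriv ?_
    simp only [hf2def]
    ring
  have hf''eq : ∀ τ ∈ Set.Ici (0:ℝ), f'' τ = f2 τ := by
    intro τ hτ
    have h1 : derivWithin f' (Set.Ici 0) τ = derivWithin f1 (Set.Ici 0) τ :=
      derivWithin_congr hf'eq (hf'eq τ hτ)
    show derivWithin f' (Set.Ici 0) τ = f2 τ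
    rw [h1, (hf2 τ hτ).derivWithin (hUD τ hτ)]
  have e1 : (0:ℝ) * ε = 0 := zero_mul ε
  refine ⟨?_, ?_, ?_, ?_⟩
  · -- boundary condition at 0
    rw [hf'eq 0 Set.self_mem_Ici]
    show ε * φ (0*ε) * g 0 - χ (0*ε) * g 0 = -(χ (0*ε) * g 0)
    rw [e1, hφ0 0 ⟨le_refl 0, by norm_num⟩, hχ1 0 ⟨le_refl 0, by norm_num⟩]
    ring
  · -- boundary condition at a
    show χ (a*ε) * g a = 0
    rw [hεa, hχ0 1 (by norm_num)]
    ring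
  · -- quasimode bound
    have hg2 : ∀ τ : ℝ, (g τ)^2 = 2*Real.exp (-2*τ) := by
      intro τ
      rw [hgdef]
      simp only []
      rw [mul_pow, Real.sq_sqrt (by norm_num : (0:ℝ) ≤ 2), pow_two, ← Real.exp_add,
        show -τ + -τ = -2*τ from by ring]
    set R : ℝ → ℝ := fun τ => -f2 τ + s * (1 - s*τ)⁻¹ * f1 τ + (1+s) * (χ (τ*ε) * g τ)
      with hRdef
    have hEq : Set.EqOn
        (fun τ => |(-f'' τ) + s * (1 - s * τ)⁻¹ * f' τ + (1 + s) * f τ| ^ 2 * (1 - s * τ))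
        (fun τ => (R τ)^2 * (1 - s*τ)) (Set.uIcc 0 a) := by
      intro τ hτ
      rw [Set.uIcc_of_le ha0.le] at hτ
      have hτ0 : τ ∈ Set.Ici (0:ℝ) := Set.mem_Ici.mpr hτ.1
      simp only [hRdef]
      rw [hf''eq τ hτ0, hf'eq τ hτ0, hfdef, sq_abs]
    rw [intervalIntegral.integral_congr hEq]
    -- continuity
    have hmuls : Continuous (fun τ : ℝ => τ * ε) := continuous_id.mul continuous_const
    have hχc : ContinuousOn (fun τ : ℝ => χ (τ*ε)) (Set.Ici 0) :=
      hχ.continuousOn.comp hmuls.continuousOn (fun y hy => mul_nonneg hy hε0.le)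
    have hφc : ContinuousOn (fun τ : ℝ => φ (τ*ε)) (Set.Ici 0) :=
      hφcd.continuousOn.comp hmuls.continuousOn (fun y hy => mul_nonneg hy hε0.le)
    have hφ₂c : ContinuousOn (fun τ : ℝ => φ₂ (τ*ε)) (Set.Ici 0) :=
      hφ₂cd.continuousOn.comp hmuls.continuousOn (fun y hy => mul_nonneg hy hε0.le)
    have hgc : Continuous g := continuous_const.mul (Real.continuous_exp.comp continuous_neg)
    have hf1c : ContinuousOn f1 (Set.Ici 0) :=
      ((continuousOn_const.mul hφc).mul hgc.continuousOn).sub (hχc.mul hgc.continuousOn)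
    have hf2c : ContinuousOn f2 (Set.Ici 0) :=
      (((continuousOn_const.mul hφ₂c).mul hgc.continuousOn).sub
        ((continuousOn_const.mul hφc).mul hgc.continuousOn)).add (hχc.mul hgc.continuousOn)
    have hIc : ContinuousOn (fun τ : ℝ => (1 - s*τ)⁻¹) (Set.Icc 0 a) :=
      (Continuous.continuousOn (continuous_const.sub (continuous_const.mul continuous_id'))).inv₀
        (fun τ hτ => ne_of_gt (by have := hw23 τ hτ; show 0 < 1 - s*τ; linarith))
    have hRc : ContinuousOn (fun τ => (R τ)^2 * (1-s*τ)) (Set.Icc 0 a) := by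
      apply ContinuousOn.mul _ (Continuous.continuousOn (continuous_const.sub (continuous_const.mul continuous_id')))
      apply ContinuousOn.pow
      exact ((hf2c.mono Set.Icc_subset_Ici_self).neg.add
        ((continuousOn_const.mul hIc).mul (hf1c.mono Set.Icc_subset_Ici_self))).add
        (continuousOn_const.mul ((hχc.mul hgc.continuousOn).mono Set.Icc_subset_Ici_self))
    have h080 : (0:ℝ) ≤ a/8 := by linarith
    have h08a : a/8 ≤ a := by linarith
    have hi1 : IntervalIntegrable (fun τ => (R τ)^2*(1-s*τ)) volume 0 (a/8) :=
      ContinuousOn.intervalIntegrable (by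
        rw [Set.uIcc_of_le h080]
        exact hRc.mono (Set.Icc_subset_Icc le_rfl h08a))
    have hi2 : IntervalIntegrable (fun τ => (R τ)^2*(1-s*τ)) volume (a/8) a :=
      ContinuousOn.intervalIntegrable (by
        rw [Set.uIcc_of_le h08a]
        exact hRc.mono (Set.Icc_subset_Icc h080 le_rfl))
    rw [← intervalIntegral.integral_add_adjacent_intervals hi1 hi2]
    -- piece 1
    have hs4 : |s|^4 = s^4 := by
      rw [← abs_pow]
      exact abs_of_nonneg (by positivity)
    have hb1 : (∫ τ in (0:ℝ)..(a/8), (R τ)^2*(1-s*τ))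
        ≤ ∫ τ in (0:ℝ)..(a/8), 6*|s|^4*(τ^2*Real.exp (-2*τ)) := by
      apply intervalIntegral.integral_mono_on h080 hi1
        (((by fun_prop : Continuous (fun τ : ℝ => 6*|s|^4*(τ^2*Real.exp (-2*τ))))).intervalIntegrable _ _)
      intro τ hτ
      have hτa : τ ∈ Set.Icc (0:ℝ) a := ⟨hτ.1, le_trans hτ.2 h08a⟩
      have hτε : τ*ε ∈ Set.Ico (0:ℝ) (1/4) := by
        constructor
        · exact mul_nonneg hτ.1 hε0.le
        · calc τ*ε ≤ (a/8)*ε := mul_le_mul_of_nonneg_right hτ.2 hε0.le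
          _ = (a*ε)/8 := by ring
          _ = 1/8 := by rw [hεa]
          _ < 1/4 := by norm_num
      have hφz : φ (τ*ε) = 0 := hφ0 _ hτε
      have hφ₂z : φ₂ (τ*ε) = 0 := hφ₂0 _ hτε
      have hwne : (1 - s*τ) ≠ 0 := ne_of_gt (by have := hw23 τ hτa; linarith)
      have hR : R τ = χ (τ*ε) * g τ * (-(s^2*τ) * (1 - s*τ)⁻¹) := by
        simp only [hRdef, hf1def, hf2def, hφz, hφ₂z]
        field_simp
        linear_combination (-(g τ * χ (ε * τ) * s)) * inv_mul_cancel₀ hwne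
      have hinvw : (1-s*τ)⁻¹ * (1-s*τ) = 1 := inv_mul_cancel₀ hwne
      have hχb := hχ01 (τ*ε) (Set.mem_Ici.mpr hτε.1)
      have hgpos : 0 < g τ := by
        have : (0:ℝ) < Real.sqrt 2 := Real.sqrt_pos.mpr (by norm_num)
        simp only [hgdef]
        positivity
      have hinvb : (1-s*τ)⁻¹ ≤ 3/2 := by
        rw [show (3:ℝ)/2 = (2/3 : ℝ)⁻¹ from by norm_num]
        exact inv_anti₀ (by norm_num) (hw23 τ hτa)
      have hinv0 : 0 ≤ (1-s*τ)⁻¹ := by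
        have := hw23 τ hτa
        positivity
      calc (R τ)^2*(1-s*τ)
          = (χ (τ*ε))^2 * (g τ)^2 * (s^4*τ^2) * ((1-s*τ)⁻¹ * ((1-s*τ)⁻¹ * (1-s*τ))) := by
            rw [hR]; ring
        _ = (χ (τ*ε))^2 * (2*Real.exp (-2*τ)) * (s^4*τ^2) * (1-s*τ)⁻¹ := by
            rw [hinvw, hg2]; ring
        _ ≤ 1 * (2*Real.exp (-2*τ)) * (s^4*τ^2) * (1-s*τ)⁻¹ := by
            apply mul_le_mul_of_nonneg_right _ hinv0
            apply mul_le_mul_of_nonneg_right _ (by positivity)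
            apply mul_le_mul_of_nonneg_right (pow_le_one₀ hχb.1 hχb.2) (by positivity)
        _ ≤ 1 * (2*Real.exp (-2*τ)) * (s^4*τ^2) * (3/2) := by
            apply mul_le_mul_of_nonneg_left hinvb (by positivity)
        _ ≤ 6*|s|^4*(τ^2*Real.exp (-2*τ)) := by
            rw [hs4]
            nlinarith [Real.exp_pos (-2*τ), sq_nonneg τ, sq_nonneg (s^2),
              mul_nonneg (mul_nonneg (sq_nonneg (s^2)) (sq_nonneg τ)) (Real.exp_pos (-2*τ)).le]
    have hb1' : (∫ τ in (0:ℝ)..(a/8), 6*|s|^4*(τ^2*Real.exp (-2*τ))) ≤ 2*(β^4*h^2) := by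
      rw [intervalIntegral.integral_const_mul]
      have := t2exp_int (a/8) h080
      have hs4h : s^4 = β^4 * h^2 := by
        rw [hsdef, mul_pow]
        congr 1
        rw [← Real.rpow_natCast (h ^ ((1:ℝ)/2)) 4, ← Real.rpow_mul hh0.le, ← Real.rpow_natCast h 2]
        norm_num
      calc 6*|s|^4 * (∫ τ in (0:ℝ)..(a/8), τ^2*Real.exp (-2*τ))
          ≤ 6*|s|^4 * (1/4) := by
            apply mul_le_mul_of_nonneg_left this (by positivity)
        _ ≤ 2*(β^4*h^2) := by
            rw [hs4, hs4h]
            have h4 : (0:ℝ) ≤ β^4*h^2 := by positivity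
            linarith
    -- piece 2
    have hb2 : (∫ τ in (a/8)..a, (R τ)^2*(1-s*τ))
        ≤ ∫ τ in (a/8)..a, 140*M^2*Real.exp (-2*τ) := by
      apply intervalIntegral.integral_mono_on h08a hi2
        (((by fun_prop : Continuous (fun τ : ℝ => 140*M^2*Real.exp (-2*τ)))).intervalIntegrable _ _)
      intro τ hτ
      have hτ0 : 0 ≤ τ := le_trans h080 hτ.1
      have hτa : τ ∈ Set.Icc (0:ℝ) a := ⟨hτ0, hτ.2⟩
      have hτε : τ*ε ∈ Set.Icc (0:ℝ) 1 := by
        constructor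
        · exact mul_nonneg hτ0 hε0.le
        · calc τ*ε ≤ a*ε := mul_le_mul_of_nonneg_right hτ.2 hε0.le
          _ = 1 := hεa
      have hgpos : 0 < g τ := by
        have : (0:ℝ) < Real.sqrt 2 := Real.sqrt_pos.mpr (by norm_num)
        simp only [hgdef]
        positivity
      have hMp : |φ (τ*ε)| ≤ M := hMφ _ hτε
      have hMq : |φ₂ (τ*ε)| ≤ M := hMφ₂ _ hτε
      have hχb := hχ01 (τ*ε) (Set.mem_Ici.mpr hτε.1)
      have hχab : |χ (τ*ε)| ≤ 1 := abs_le.mpr ⟨by linarith [hχb.1], hχb.2⟩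
      have hw2 := hw23 τ hτa
      have hw4 := hw43 τ hτa
      have hinvb : (1-s*τ)⁻¹ ≤ 3/2 := by
        rw [show (3:ℝ)/2 = (2/3 : ℝ)⁻¹ from by norm_num]
        exact inv_anti₀ (by norm_num) hw2
      have hinv0 : 0 ≤ (1-s*τ)⁻¹ := by positivity
      have hsI : |s * (1-s*τ)⁻¹| ≤ 1/2 := by
        rw [abs_mul, abs_of_nonneg hinv0]
        calc |s| * (1-s*τ)⁻¹ ≤ (1/3) * (3/2) :=
          mul_le_mul hs3.le hinvb hinv0 (by norm_num)
        _ = 1/2 := by norm_num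
      -- R as bracket * g
      have hstep : R τ = (-(ε^2 * φ₂ (τ*ε)) + 2*ε*φ (τ*ε) + s*(1-s*τ)⁻¹*ε*φ (τ*ε)
          + (s - s*(1-s*τ)⁻¹) * χ (τ*ε)) * g τ := by
        simp only [hRdef, hf1def, hf2def]
        ring
      have ht1 : |(-(ε^2 * φ₂ (τ*ε)))| ≤ M := by
        rw [abs_neg, abs_mul, abs_of_nonneg (sq_nonneg ε)]
        calc ε^2 * |φ₂ (τ*ε)| ≤ 1 * M := by
              apply mul_le_mul _ hMq (abs_nonneg _) zero_le_one
              nlinarith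
          _ = M := one_mul M
      have ht2 : |2*ε*φ (τ*ε)| ≤ 2*M := by
        rw [abs_mul]
        calc |2*ε| * |φ (τ*ε)| ≤ 2 * M := by
              apply mul_le_mul _ hMp (abs_nonneg _) (by norm_num)
              rw [abs_of_nonneg (by linarith : (0:ℝ) ≤ 2*ε)]
              linarith
          _ = 2*M := rfl
      have ht3 : |s*(1-s*τ)⁻¹*ε*φ (τ*ε)| ≤ M := by
        rw [abs_mul, abs_mul]
        calc |s*(1-s*τ)⁻¹| * |ε| * |φ (τ*ε)| ≤ (1/2) * 1 * M := by
              apply mul_le_mul _ hMp (abs_nonneg _) (by norm_num)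
              apply mul_le_mul hsI _ (abs_nonneg _) (by norm_num)
              rw [abs_of_nonneg hε0.le]; exact hε1
          _ ≤ M := by linarith
      have ht4 : |(s - s*(1-s*τ)⁻¹) * χ (τ*ε)| ≤ M := by
        rw [abs_mul]
        have habs4 : |s - s*(1-s*τ)⁻¹| ≤ 1 := by
          calc |s - s*(1-s*τ)⁻¹| ≤ |s| + |s*(1-s*τ)⁻¹| := abs_sub _ _
          _ ≤ 1/3 + 1/2 := add_le_add hs3.le hsI
          _ ≤ 1 := by norm_num
        calc |s - s*(1-s*τ)⁻¹| * |χ (τ*ε)| ≤ 1 * 1 :=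
              mul_le_mul habs4 hχab (abs_nonneg _) zero_le_one
          _ ≤ M := by linarith
      have hRb : |R τ| ≤ (7*M) * g τ := by
        rw [hstep, abs_mul, abs_of_nonneg hgpos.le]
        apply mul_le_mul_of_nonneg_right _ hgpos.le
        calc |(-(ε^2 * φ₂ (τ*ε)) + 2*ε*φ (τ*ε) + s*(1-s*τ)⁻¹*ε*φ (τ*ε)
            + (s - s*(1-s*τ)⁻¹) * χ (τ*ε))|
            ≤ |(-(ε^2 * φ₂ (τ*ε)) + 2*ε*φ (τ*ε) + s*(1-s*τ)⁻¹*ε*φ (τ*ε))|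
              + |(s - s*(1-s*τ)⁻¹) * χ (τ*ε)| := abs_add_le _ _
          _ ≤ (|(-(ε^2 * φ₂ (τ*ε)) + 2*ε*φ (τ*ε))| + |s*(1-s*τ)⁻¹*ε*φ (τ*ε)|)
              + |(s - s*(1-s*τ)⁻¹) * χ (τ*ε)| := by
            apply add_le_add_left (abs_add_le _ _)
          _ ≤ ((|(-(ε^2 * φ₂ (τ*ε)))| + |2*ε*φ (τ*ε)|) + |s*(1-s*τ)⁻¹*ε*φ (τ*ε)|)
              + |(s - s*(1-s*τ)⁻¹) * χ (τ*ε)| := by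
            apply add_le_add_left (add_le_add_left (abs_add_le _ _) _)
          _ ≤ ((M + 2*M) + M) + M := by
            apply add_le_add (add_le_add (add_le_add ht1 ht2) ht3) ht4
          _ ≤ 7*M := by linarith
      have hRsq : (R τ)^2 ≤ (7*M * g τ)^2 := by
        rw [← sq_abs (R τ)]
        apply pow_le_pow_left₀ (abs_nonneg _) hRb
      calc (R τ)^2*(1-s*τ) ≤ (7*M*g τ)^2 * (4/3) := by
            apply mul_le_mul hRsq hw4 (by linarith) (by positivity)
        _ = 49*M^2*(g τ)^2*(4/3) := by ring
        _ = 49*M^2*(2*Real.exp (-2*τ))*(4/3) := by rw [hg2]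
        _ ≤ 140*M^2*Real.exp (-2*τ) := by nlinarith [Real.exp_pos (-2*τ), sq_nonneg M, mul_nonneg (sq_nonneg M) (Real.exp_pos (-2*τ)).le]
    have hb2' : (∫ τ in (a/8)..a, 140*M^2*Real.exp (-2*τ)) ≤ 70*M^2*Real.exp (-a/4) := by
      rw [intervalIntegral.integral_const_mul, exp_int]
      have he1 : Real.exp (-2*(a/8)) = Real.exp (-a/4) := by
        rw [show -2*(a/8) = -a/4 from by ring]
      rw [he1]
      have h1 : 0 < Real.exp (-2*a) := Real.exp_pos _
      nlinarith [sq_nonneg M, mul_nonneg (sq_nonneg M) h1.le]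
    calc (∫ τ in (0:ℝ)..(a/8), (R τ)^2*(1-s*τ)) + (∫ τ in (a/8)..a, (R τ)^2*(1-s*τ))
        ≤ 2*(β^4*h^2) + 70*M^2*Real.exp (-a/4) := add_le_add (le_trans hb1 hb1') (le_trans hb2 hb2')
      _ ≤ 100*M^2 * (β^4*h^2 + Real.exp (-a/4)) := by
          have h1 : (0:ℝ) ≤ β^4*h^2 := by positivity
          have h2 : (0:ℝ) < Real.exp (-a/4) := Real.exp_pos _
          have hM2 : (1:ℝ) ≤ M^2 := by nlinarith
          have k1 : 0 ≤ (100*M^2 - 2) * (β^4*h^2) := mul_nonneg (by linarith) h1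
          have k2 : 0 ≤ (30*M^2) * Real.exp (-a/4) := mul_nonneg (by nlinarith) h2.le
          nlinarith [k1, k2]
  · -- normalization bound
    have hg2 : ∀ τ : ℝ, (g τ)^2 = 2*Real.exp (-2*τ) := by
      intro τ
      rw [hgdef]
      simp only []
      rw [mul_pow, Real.sq_sqrt (by norm_num : (0:ℝ) ≤ 2), pow_two, ← Real.exp_add,
        show -τ + -τ = -2*τ from by ring]
    have hmuls : Continuous (fun τ : ℝ => τ * ε) := continuous_id.mul continuous_const
    have hχc : ContinuousOn (fun τ : ℝ => χ (τ*ε)) (Set.Ici 0) :=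
      hχ.continuousOn.comp hmuls.continuousOn (fun y hy => mul_nonneg hy hε0.le)
    have hAi : ∀ b c : ℝ, 0 ≤ b → b ≤ c → c ≤ a →
        IntervalIntegrable (fun τ => (χ (τ*ε))^2 * (2*Real.exp (-2*τ))) volume b c := by
      intro b c hb hbc hca
      apply ContinuousOn.intervalIntegrable
      rw [Set.uIcc_of_le hbc]
      apply ContinuousOn.mul
      · exact ((hχc.mono (fun x hx => le_trans hb hx.1)).pow 2)
      · exact (Continuous.continuousOn (continuous_const.mul
          (Real.continuous_exp.comp (continuous_const.mul continuous_id'))))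
    have hBi : IntervalIntegrable (fun τ => (χ (τ*ε))^2 * (2*(τ*Real.exp (-2*τ)))) volume 0 a := by
      apply ContinuousOn.intervalIntegrable
      rw [Set.uIcc_of_le ha0.le]
      apply ContinuousOn.mul
      · exact ((hχc.mono (fun x hx => hx.1)).pow 2)
      · exact (Continuous.continuousOn (continuous_const.mul
          (continuous_id'.mul (Real.continuous_exp.comp (continuous_const.mul continuous_id')))))
    set A := ∫ τ in (0:ℝ)..a, (χ (τ*ε))^2*(2*Real.exp (-2*τ)) with hAdef
    set B := ∫ τ in (0:ℝ)..a, (χ (τ*ε))^2*(2*(τ*Real.exp (-2*τ))) with hBdef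
    have hsplit : (∫ τ in (0:ℝ)..a, (f τ)^2 * (1 - s*τ)) = A - s*B := by
      rw [hAdef, hBdef, ← intervalIntegral.integral_const_mul,
        ← intervalIntegral.integral_sub (hAi 0 a le_rfl ha0.le le_rfl)
          ((hBi.const_mul s))]
      apply intervalIntegral.integral_congr
      intro τ hτ
      simp only [hfdef]
      linear_combination (χ (τ*ε))^2 * (1-s*τ) * hg2 τ
    rw [hsplit]
    -- bounds on B
    have hB0 : 0 ≤ B := by
      rw [hBdef]
      apply intervalIntegral.integral_nonneg ha0.le
      intro τ hτ
      have : 0 ≤ τ := hτ.1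
      positivity
    have hB12 : B ≤ 1/2 := by
      rw [hBdef]
      calc (∫ τ in (0:ℝ)..a, (χ (τ*ε))^2*(2*(τ*Real.exp (-2*τ))))
          ≤ ∫ τ in (0:ℝ)..a, 2*(τ*Real.exp (-2*τ)) := by
            apply intervalIntegral.integral_mono_on ha0.le hBi
              (((by fun_prop : Continuous (fun τ : ℝ => 2*(τ*Real.exp (-2*τ))))).intervalIntegrable _ _)
            intro τ hτ
            have hτ0 : 0 ≤ τ := hτ.1
            have hτε : τ*ε ∈ Set.Ici (0:ℝ) := Set.mem_Ici.mpr (mul_nonneg hτ0 hε0.le)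
            have hχb := hχ01 (τ*ε) hτε
            have h1 : (χ (τ*ε))^2 ≤ 1 := pow_le_one₀ hχb.1 hχb.2
            have h2 : (0:ℝ) ≤ 2*(τ*Real.exp (-2*τ)) := by positivity
            nlinarith
        _ = 2 * ∫ τ in (0:ℝ)..a, τ*Real.exp (-2*τ) := intervalIntegral.integral_const_mul _ _
        _ ≤ 2 * (1/4) := by
            apply mul_le_mul_of_nonneg_left (texp_int a ha0.le) (by norm_num)
        _ = 1/2 := by norm_num
    -- bounds on A
    have h4a : a/4 ≤ a := by linarith
    have h04 : (0:ℝ) ≤ a/4 := by linarith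
    have hA1 : (∫ τ in (0:ℝ)..(a/4), (χ (τ*ε))^2*(2*Real.exp (-2*τ)))
        = 1 - Real.exp (-a/2) := by
      have hcg : Set.EqOn (fun τ => (χ (τ*ε))^2*(2*Real.exp (-2*τ)))
          (fun τ => 2*Real.exp (-2*τ)) (Set.uIcc 0 (a/4)) := by
        intro τ hτ
        rw [Set.uIcc_of_le h04] at hτ
        have hτε : τ*ε ∈ Set.Icc (0:ℝ) (1/4) := by
          constructor
          · exact mul_nonneg hτ.1 hε0.le
          · calc τ*ε ≤ (a/4)*ε := mul_le_mul_of_nonneg_right hτ.2 hε0.le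
            _ = (a*ε)/4 := by ring
            _ = 1/4 := by rw [hεa]
        simp only [hχ1 (τ*ε) hτε]
        norm_num
      rw [intervalIntegral.integral_congr hcg, intervalIntegral.integral_const_mul, exp_int]
      rw [show -2*(a/4) = -a/2 from by ring]
      norm_num
      ring
    have hA2a : (0:ℝ) ≤ ∫ τ in (a/4)..a, (χ (τ*ε))^2*(2*Real.exp (-2*τ)) := by
      apply intervalIntegral.integral_nonneg h4a
      intro τ hτ
      positivity
    have hA2b : (∫ τ in (a/4)..a, (χ (τ*ε))^2*(2*Real.exp (-2*τ))) ≤ Real.exp (-a/2) := by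
      calc (∫ τ in (a/4)..a, (χ (τ*ε))^2*(2*Real.exp (-2*τ)))
          ≤ ∫ τ in (a/4)..a, 2*Real.exp (-2*τ) := by
            apply intervalIntegral.integral_mono_on h4a (hAi (a/4) a h04 h4a le_rfl)
              (((by fun_prop : Continuous (fun τ : ℝ => 2*Real.exp (-2*τ)))).intervalIntegrable _ _)
            intro τ hτ
            have hτ0 : 0 ≤ τ := le_trans h04 hτ.1
            have hτε : τ*ε ∈ Set.Ici (0:ℝ) := Set.mem_Ici.mpr (mul_nonneg hτ0 hε0.le)
            have hχb := hχ01 (τ*ε) hτε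
            have h1 : (χ (τ*ε))^2 ≤ 1 := pow_le_one₀ hχb.1 hχb.2
            have h2 : (0:ℝ) < Real.exp (-2*τ) := Real.exp_pos _
            nlinarith
        _ = 2 * ((Real.exp (-2*(a/4)) - Real.exp (-2*a))/2) := by
            rw [intervalIntegral.integral_const_mul, exp_int]
        _ ≤ Real.exp (-a/2) := by
            rw [show -2*(a/4) = -a/2 from by ring]
            have := Real.exp_pos (-2*a)
            linarith
    have hAsplit : A = (∫ τ in (0:ℝ)..(a/4), (χ (τ*ε))^2*(2*Real.exp (-2*τ)))
        + ∫ τ in (a/4)..a, (χ (τ*ε))^2*(2*Real.exp (-2*τ)) := by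
      rw [hAdef, ← intervalIntegral.integral_add_adjacent_intervals
        (hAi 0 (a/4) le_rfl h04 h4a) (hAi (a/4) a h04 h4a le_rfl)]
    have hAabs : |A - 1| ≤ Real.exp (-a/2) := by
      rw [hAsplit, hA1]
      rw [abs_le]
      constructor <;> [linarith; linarith]
    have hexp24 : Real.exp (-a/2) ≤ Real.exp (-a/4) := by
      apply Real.exp_le_exp.mpr
      linarith
    rw [← habs]
    have hfin : |A - s*B - 1| ≤ Real.exp (-a/4) + |s|/2 := by
      have h1 : A - s*B - 1 = (A - 1) + (-(s*B)) := by ring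
      rw [h1]
      calc |(A-1) + -(s*B)| ≤ |A-1| + |-(s*B)| := abs_add_le _ _
        _ = |A-1| + |s| * |B| := by rw [abs_neg, abs_mul]
        _ ≤ Real.exp (-a/2) + |s| * (1/2) := by
            apply add_le_add hAabs
            apply mul_le_mul_of_nonneg_left _ (abs_nonneg s)
            rw [abs_of_nonneg hB0]
            exact hB12
        _ ≤ Real.exp (-a/4) + |s|/2 := by linarith
    calc |A - s*B - 1| ≤ Real.exp (-a/4) + |s|/2 := hfin
      _ ≤ 100*M^2 * (|s| + Real.exp (-a/4)) := by
          have h1 : (0:ℝ) < Real.exp (-a/4) := Real.exp_pos _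
          have h2 : (0:ℝ) ≤ |s| := abs_nonneg s
          have hM2 : (1:ℝ) ≤ M^2 := by nlinarith
          have k1 : 0 ≤ (100*M^2 - 1) * Real.exp (-a/4) := mul_nonneg (by linarith) h1.le
          have k2 : 0 ≤ (100*M^2 - 1/2) * |s| := mul_nonneg (by linarith) h2
          nlinarith [k1, k2]
end
end
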